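/- arXiv:2107.00177 — 2 statements merged into one kernel-verified Lean document; each statement's English description precedes it below -/
import Mathlib

section
/- Bi-Lipschitz property of the fiber-wise collar straightening map: with φ, ψ as above, for x = (t_x, x̄), y = (t_y, ȳ) ∈ R_{-δ} = (-δ,0) × ℝ^{d-1}, define x' = ((1 + t_x/δ)φ(x̄) - (t_x/δ)ψ(x̄), x̄) and similarly y'. Then there exist constants K_L ≥ 1 and K'_L ≤ 1, depending only on L and not on δ, such that K'_L |x - y| ≤ |x' - y'| ≤ K_L |x - y|. -/
open MeasureTheory Real Set Filter

noncomputable section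

/-- Surface area of the unit `(d-1)`-sphere in `ℝ^d`. -/
def sphereArea (d : ℕ) : ℝ :=
  d * (volume (Metric.ball (0 : EuclideanSpace ℝ (Fin d)) 1)).toReal

/-- The rescaled nonlocal kernel `γ_δ^β(r) = C_{d,p,β} δ^{-(d+p-β)} r^{-β} 1_{r<δ}`
with `C_{d,p,β} = (d+p-β)/s_{d-1}`. -/
def nlKernel (d : ℕ) (p β δ r : ℝ) : ℝ :=
  if r < δ then (((d : ℝ) + p - β) / (sphereArea d * δ ^ ((d : ℝ) + p - β))) * r ^ (-β) else 0

/-- The (p-th power of the) nonlocal seminorm `|u|^p_{S_δ^β(U)}`. -/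
def Ssem (d : ℕ) (p β δ : ℝ) (U : Set (EuclideanSpace ℝ (Fin d)))
    (u : EuclideanSpace ℝ (Fin d) → ℝ) : ℝ :=
  ∫ x in U, ∫ y in U, nlKernel d p β δ (dist y x) * |u y - u x| ^ p

/-- The (p-th power of the) nonlocal trace seminorm `|u|^p_{T_δ^β(Ω)}`. -/
def Tsem (d : ℕ) (p β δ : ℝ) (Ω : Set (EuclideanSpace ℝ (Fin d)))
    (u : EuclideanSpace ℝ (Fin d) → ℝ) : ℝ :=
  δ ^ (β - 2) * ∫ x in Ω, ∫ y in Ω,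
    |u y - u x| ^ p / ((max (dist y x) δ) ^ ((d : ℝ) + p - 2) * (min (dist y x) δ) ^ β)

/-- The p-th power of the `L^p` norm of `u` over `U`. -/
def LpPow (d : ℕ) (p : ℝ) (U : Set (EuclideanSpace ℝ (Fin d)))
    (u : EuclideanSpace ℝ (Fin d) → ℝ) : ℝ :=
  ∫ x in U, |u x| ^ p

/-- The stripe `(a,b) × ℝ^{d-1}`. -/
def stripe (d : ℕ) (hd : 0 < d) (a b : ℝ) : Set (EuclideanSpace ℝ (Fin d)) :=
  {x | a < x ⟨0, hd⟩ ∧ x ⟨0, hd⟩ < b}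

/-- The half space `(a,∞) × ℝ^{d-1}`. -/
def stripeInf (d : ℕ) (hd : 0 < d) (a : ℝ) : Set (EuclideanSpace ℝ (Fin d)) :=
  {x | a < x ⟨0, hd⟩}

/-- The point `(t, xb) ∈ ℝ × ℝ^{d-1} = ℝ^d`. -/
def mkPt (n : ℕ) (t : ℝ) (xb : EuclideanSpace ℝ (Fin n)) :
    EuclideanSpace ℝ (Fin (n + 1)) :=
  WithLp.toLp 2 (Fin.cons t (fun j => xb j) : Fin (n + 1) → ℝ)

/-- The tangential part `xb` of a point `x = (t, xb) ∈ ℝ^d`. -/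
def tailPt (n : ℕ) (x : EuclideanSpace ℝ (Fin (n + 1))) : EuclideanSpace ℝ (Fin n) :=
  WithLp.toLp 2 (fun j : Fin n => x j.succ)

/-- The graph `Φ(ℝ^{d-1}) = {(φ(xb), xb)} ⊂ ℝ^d` of `φ`. -/
def graphSet (n : ℕ) (φ : EuclideanSpace ℝ (Fin n) → ℝ) :
    Set (EuclideanSpace ℝ (Fin (n + 1))) :=
  {z | ∃ xb, z = mkPt n (φ xb) xb}

/-- The admissible offset levels at `xb`:
`{t : dist((t,xb), Φ(ℝ^{d-1})) = δ and t < φ(xb)}`. -/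
def offsetLevels (n : ℕ) (φ : EuclideanSpace ℝ (Fin n) → ℝ) (δ : ℝ)
    (xb : EuclideanSpace ℝ (Fin n)) : Set ℝ :=
  {t | Metric.infDist (mkPt n t xb) (graphSet n φ) = δ ∧ t < φ xb}

/-- The inner `δ`-offset `ψ` of the Lipschitz graph of `φ`, defined as the minimal
admissible offset level. -/
def psiOff (n : ℕ) (φ : EuclideanSpace ℝ (Fin n) → ℝ) (δ : ℝ)
    (xb : EuclideanSpace ℝ (Fin n)) : ℝ :=
  sInf (offsetLevels n φ δ xb)

/-- The fiber-wise collar straightening map sending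
`x = (t, xb) ∈ (-δ,0) × ℝ^{d-1}` to `x' = ((1+t/δ)φ(xb) - (t/δ)ψ(xb), xb)`. -/
def collarMap (n : ℕ) (φ ψ : EuclideanSpace ℝ (Fin n) → ℝ) (δ : ℝ)
    (x : EuclideanSpace ℝ (Fin (n + 1))) : EuclideanSpace ℝ (Fin (n + 1)) :=
  mkPt n ((1 + x 0 / δ) * φ (tailPt n x) - (x 0 / δ) * ψ (tailPt n x)) (tailPt n x)

namespace CollarAux

variable {n : ℕ}

lemma dist_mkPt (t s : ℝ) (a b : EuclideanSpace ℝ (Fin n)) :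
    dist (mkPt n t a) (mkPt n s b) = Real.sqrt ((t - s)^2 + dist a b^2) := by
  rw [EuclideanSpace.dist_eq]
  congr 1
  rw [Fin.sum_univ_succ]
  have h0 : dist (mkPt n t a 0) (mkPt n s b 0) = dist t s := by simp [mkPt]
  have hs : ∀ j : Fin n, dist (mkPt n t a j.succ) (mkPt n s b j.succ) = dist (a j) (b j) :=
    fun j => rfl
  rw [h0]
  have : ∑ j : Fin n, dist (mkPt n t a j.succ) (mkPt n s b j.succ) ^ 2
      = ∑ j : Fin n, dist (a j) (b j) ^ 2 := by
    refine Finset.sum_congr rfl fun j _ => by rw [hs j]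
  rw [this, Real.dist_eq, sq_abs]
  congr 1
  rw [EuclideanSpace.dist_eq, Real.sq_sqrt]
  positivity

lemma mkPt_eta (x : EuclideanSpace ℝ (Fin (n + 1))) : mkPt n (x 0) (tailPt n x) = x := by
  ext i
  refine Fin.cases ?_ ?_ i
  · simp [mkPt]
  · intro j; simp [mkPt, tailPt]

lemma graph_nonempty (φ : EuclideanSpace ℝ (Fin n) → ℝ) : (graphSet n φ).Nonempty :=
  ⟨mkPt n (φ 0) 0, 0, rfl⟩

/-- distance-below-graph function -/
def gfun (φ : EuclideanSpace ℝ (Fin n) → ℝ) (xb : EuclideanSpace ℝ (Fin n)) (t : ℝ) : ℝ :=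
  Metric.infDist (mkPt n t xb) (graphSet n φ)

lemma gfun_nonneg (φ : EuclideanSpace ℝ (Fin n) → ℝ) (xb : EuclideanSpace ℝ (Fin n)) (t : ℝ) :
    0 ≤ gfun φ xb t := Metric.infDist_nonneg

lemma gfun_cont (φ : EuclideanSpace ℝ (Fin n) → ℝ) (xb : EuclideanSpace ℝ (Fin n)) :
    Continuous (gfun φ xb) := by
  have hlip : LipschitzWith 1 (fun t : ℝ => mkPt n t xb) := by
    apply LipschitzWith.of_dist_le_mul
    intro t s
    rw [dist_mkPt, dist_self]
    simp [Real.sqrt_sq_eq_abs, Real.dist_eq]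
  exact (Metric.continuous_infDist_pt _).comp hlip.continuous

lemma le_gfun {φ : EuclideanSpace ℝ (Fin n) → ℝ} {xb : EuclideanSpace ℝ (Fin n)} {t b : ℝ}
    (h : ∀ w, b ≤ dist (mkPt n t xb) (mkPt n (φ w) w)) : b ≤ gfun φ xb t := by
  by_contra hc
  push_neg at hc
  obtain ⟨z, hz, hzd⟩ := (Metric.infDist_lt_iff (graph_nonempty φ)).1 hc
  obtain ⟨w, rfl⟩ := hz
  exact absurd (h w) (not_le.2 hzd)

lemma gfun_at_graph (φ : EuclideanSpace ℝ (Fin n) → ℝ) (xb : EuclideanSpace ℝ (Fin n)) :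
    gfun φ xb (φ xb) = 0 :=
  Metric.infDist_zero_of_mem ⟨xb, rfl⟩

lemma gfun_le (φ : EuclideanSpace ℝ (Fin n) → ℝ) (xb : EuclideanSpace ℝ (Fin n)) (t : ℝ) :
    gfun φ xb t ≤ |φ xb - t| := by
  have hmem : mkPt n (φ xb) xb ∈ graphSet n φ := ⟨xb, rfl⟩
  calc gfun φ xb t ≤ dist (mkPt n t xb) (mkPt n (φ xb) xb) :=
        Metric.infDist_le_dist_of_mem hmem
    _ = |φ xb - t| := by
        rw [dist_mkPt, dist_self]
        norm_num [Real.sqrt_sq_eq_abs, abs_sub_comm]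

lemma key_ineq {L h₀ s B : ℝ} (hL : 0 ≤ L) (hh0 : 0 ≤ h₀) (hs : 0 ≤ s)
    (hB : h₀ - L * s ≤ B) : h₀^2 ≤ (1 + L^2) * (B^2 + s^2) := by
  rcases le_total (L * s) h₀ with hc | hc
  · have h1 : 0 ≤ h₀ - L * s := by linarith
    have h2 : 0 ≤ B + (h₀ - L * s) := by linarith
    nlinarith [sq_nonneg (L * h₀ - (1 + L^2) * s), mul_nonneg (sub_nonneg.2 hB) h2]
  · nlinarith [sq_nonneg B, sq_nonneg s, mul_le_mul hc hc hh0 (mul_nonneg hL hs)]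

lemma gfun_lower {L : NNReal} {φ : EuclideanSpace ℝ (Fin n) → ℝ} (hφ : LipschitzWith L φ)
    (xb : EuclideanSpace ℝ (Fin n)) {t : ℝ} (h : t ≤ φ xb) :
    (φ xb - t) / Real.sqrt (1 + (L:ℝ)^2) ≤ gfun φ xb t := by
  have hS1 : (1:ℝ) ≤ Real.sqrt (1 + (L:ℝ)^2) := by
    rw [Real.one_le_sqrt]; nlinarith [sq_nonneg ((L:ℝ))]
  have hSpos : (0:ℝ) < Real.sqrt (1 + (L:ℝ)^2) := lt_of_lt_of_le one_pos hS1
  have hSsq : (Real.sqrt (1 + (L:ℝ)^2))^2 = 1 + (L:ℝ)^2 := Real.sq_sqrt (by positivity)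
  apply le_gfun
  intro w
  rw [dist_mkPt]
  have hB : (φ xb - t) - (L:ℝ) * dist xb w ≤ φ w - t := by
    have h1 := hφ.dist_le_mul xb w
    rw [Real.dist_eq] at h1
    have h2 := (abs_le.1 h1).2
    linarith
  have key := key_ineq (L := (L:ℝ)) (h₀ := φ xb - t) (s := dist xb w) (B := φ w - t)
    (L.coe_nonneg) (sub_nonneg.2 h) dist_nonneg hB
  have hgoal : ((φ xb - t) / Real.sqrt (1 + (L:ℝ)^2))^2 ≤ (t - φ w)^2 + dist xb w^2 := by
    rw [div_pow, hSsq, div_le_iff₀ (by positivity : (0:ℝ) < 1 + (L:ℝ)^2)]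
    calc (φ xb - t)^2 ≤ (1 + (L:ℝ)^2) * ((φ w - t)^2 + dist xb w^2) := key
      _ = ((t - φ w)^2 + dist xb w^2) * (1 + (L:ℝ)^2) := by ring
  calc (φ xb - t) / Real.sqrt (1 + (L:ℝ)^2)
      ≤ Real.sqrt (((φ xb - t) / Real.sqrt (1 + (L:ℝ)^2))^2) := by
        rw [Real.sqrt_sq_eq_abs]; exact le_abs_self _
    _ ≤ Real.sqrt ((t - φ w)^2 + dist xb w^2) := Real.sqrt_le_sqrt hgoal


lemma exists_root {L : NNReal} {φ : EuclideanSpace ℝ (Fin n) → ℝ} (hφ : LipschitzWith L φ)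
    {δ : ℝ} (hδ : 0 < δ) (xb : EuclideanSpace ℝ (Fin n)) {s : ℝ}
    (hs : s ≤ φ xb) (hgs : gfun φ xb s ≤ δ) :
    ∃ t ∈ offsetLevels n φ δ xb, t ≤ s := by
  set S : ℝ := Real.sqrt (1 + (L:ℝ)^2) with hSdef
  have hS1 : (1:ℝ) ≤ S := by rw [hSdef, Real.one_le_sqrt]; nlinarith [sq_nonneg ((L:ℝ))]
  have hSpos : (0:ℝ) < S := lt_of_lt_of_le one_pos hS1
  set t₀ : ℝ := min s (φ xb - δ * S - 1) with ht₀def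
  have ht₀s : t₀ ≤ s := min_le_left _ _
  have ht₀φ : t₀ ≤ φ xb - δ * S - 1 := min_le_right _ _
  have hg₀ : δ < gfun φ xb t₀ := by
    have hlow := gfun_lower hφ xb (t := t₀) (by nlinarith)
    have hinv : (1/S)*S = 1 := by field_simp
    have : δ + 1/S ≤ (φ xb - t₀)/S := by
      rw [le_div_iff₀ hSpos]
      nlinarith
    have h1S : 0 < 1/S := by positivity
    linarith
  have hIcc : δ ∈ Icc (gfun φ xb s) (gfun φ xb t₀) := ⟨hgs, le_of_lt hg₀⟩
  have hImage := intermediate_value_Icc' ht₀s ((gfun_cont φ xb).continuousOn) hIcc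
  obtain ⟨t, htmem, htval⟩ := hImage
  have htlt : t < φ xb := by
    rcases lt_or_eq_of_le (le_trans htmem.2 hs) with h | h
    · exact h
    · exfalso
      rw [h] at htval
      rw [gfun_at_graph] at htval
      linarith
  exact ⟨t, ⟨htval, htlt⟩, htmem.2⟩

lemma offset_nonempty {L : NNReal} {φ : EuclideanSpace ℝ (Fin n) → ℝ} (hφ : LipschitzWith L φ)
    {δ : ℝ} (hδ : 0 < δ) (xb : EuclideanSpace ℝ (Fin n)) :
    (offsetLevels n φ δ xb).Nonempty := by
  obtain ⟨t, ht, _⟩ := exists_root hφ hδ xb (le_refl (φ xb))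
    (by rw [gfun_at_graph]; exact le_of_lt hδ)
  exact ⟨t, ht⟩

lemma mem_offset_bounds {L : NNReal} {φ : EuclideanSpace ℝ (Fin n) → ℝ} (hφ : LipschitzWith L φ)
    {δ : ℝ} (hδ : 0 < δ) {xb : EuclideanSpace ℝ (Fin n)} {t : ℝ}
    (ht : t ∈ offsetLevels n φ δ xb) :
    φ xb - δ * Real.sqrt (1 + (L:ℝ)^2) ≤ t ∧ t ≤ φ xb - δ := by
  obtain ⟨hval0, hlt⟩ := ht
  have hval : gfun φ xb t = δ := hval0
  have hSpos : (0:ℝ) < Real.sqrt (1 + (L:ℝ)^2) := by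
    rw [Real.sqrt_pos]; positivity
  constructor
  · have := gfun_lower hφ xb (le_of_lt hlt)
    rw [hval, div_le_iff₀ hSpos] at this
    linarith [mul_comm δ (Real.sqrt (1 + (L:ℝ)^2))]
  · have := gfun_le φ xb t
    rw [hval, abs_of_pos (by linarith : 0 < φ xb - t)] at this
    linarith

lemma offset_bddBelow {L : NNReal} {φ : EuclideanSpace ℝ (Fin n) → ℝ} (hφ : LipschitzWith L φ)
    {δ : ℝ} (hδ : 0 < δ) (xb : EuclideanSpace ℝ (Fin n)) :
    BddBelow (offsetLevels n φ δ xb) :=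
  ⟨φ xb - δ * Real.sqrt (1 + (L:ℝ)^2), fun t ht => (mem_offset_bounds hφ hδ ht).1⟩

lemma psi_le {L : NNReal} {φ : EuclideanSpace ℝ (Fin n) → ℝ} (hφ : LipschitzWith L φ)
    {δ : ℝ} (hδ : 0 < δ) (xb : EuclideanSpace ℝ (Fin n)) :
    psiOff n φ δ xb ≤ φ xb - δ := by
  obtain ⟨t, ht⟩ := offset_nonempty hφ hδ xb
  exact le_trans (csInf_le (offset_bddBelow hφ hδ xb) ht) (mem_offset_bounds hφ hδ ht).2

lemma le_psi {L : NNReal} {φ : EuclideanSpace ℝ (Fin n) → ℝ} (hφ : LipschitzWith L φ)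
    {δ : ℝ} (hδ : 0 < δ) (xb : EuclideanSpace ℝ (Fin n)) :
    φ xb - δ * Real.sqrt (1 + (L:ℝ)^2) ≤ psiOff n φ δ xb :=
  le_csInf (offset_nonempty hφ hδ xb) (fun t ht => (mem_offset_bounds hφ hδ ht).1)

lemma psi_mem {L : NNReal} {φ : EuclideanSpace ℝ (Fin n) → ℝ} (hφ : LipschitzWith L φ)
    {δ : ℝ} (hδ : 0 < δ) (xb : EuclideanSpace ℝ (Fin n)) :
    psiOff n φ δ xb ∈ offsetLevels n φ δ xb := by
  have heq : offsetLevels n φ δ xb = {t | gfun φ xb t = δ} ∩ Iic (φ xb - δ) := by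
    ext t
    constructor
    · intro ht; exact ⟨ht.1, (mem_offset_bounds hφ hδ ht).2⟩
    · intro ⟨h1, h2⟩; exact ⟨h1, by simp at h2; linarith⟩
  have hclosed : IsClosed (offsetLevels n φ δ xb) := by
    rw [heq]
    exact (isClosed_eq (gfun_cont φ xb) continuous_const).inter isClosed_Iic
  exact hclosed.csInf_mem (offset_nonempty hφ hδ xb) (offset_bddBelow hφ hδ xb)

lemma psi_le_of_root {L : NNReal} {φ : EuclideanSpace ℝ (Fin n) → ℝ} (hφ : LipschitzWith L φ)
    {δ : ℝ} (hδ : 0 < δ) (xb : EuclideanSpace ℝ (Fin n)) {s : ℝ}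
    (hs : s ≤ φ xb) (hgs : gfun φ xb s ≤ δ) : psiOff n φ δ xb ≤ s := by
  obtain ⟨t, ht, hts⟩ := exists_root hφ hδ xb hs hgs
  exact le_trans (csInf_le (offset_bddBelow hφ hδ xb) ht) hts


lemma seg_ivt {φ : EuclideanSpace ℝ (Fin n) → ℝ} (hc : Continuous φ)
    (a b : EuclideanSpace ℝ (Fin n)) {c : ℝ} (h1 : φ a ≤ c) (h2 : c ≤ φ b) :
    ∃ w, φ w = c ∧ dist w b ≤ dist a b := by
  set f : ℝ → ℝ := fun θ => φ (a + θ • (b - a)) with hfdef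
  have hfc : Continuous f :=
    hc.comp (continuous_const.add (continuous_id.smul continuous_const))
  have hf0 : f 0 = φ a := by simp [hfdef]
  have hf1 : f 1 = φ b := by simp [hfdef]
  have : c ∈ Icc (f 0) (f 1) := by rw [hf0, hf1]; exact ⟨h1, h2⟩
  obtain ⟨θ, hθ, hθval⟩ := intermediate_value_Icc zero_le_one hfc.continuousOn this
  refine ⟨a + θ • (b - a), hθval, ?_⟩
  rw [dist_eq_norm, dist_eq_norm]
  have heq : a + θ • (b - a) - b = (1 - θ) • (a - b) := by
    module
  rw [heq, norm_smul, Real.norm_eq_abs, abs_of_nonneg (by linarith [hθ.2] : (0:ℝ) ≤ 1 - θ)]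
  nlinarith [norm_nonneg (a - b), hθ.1, hθ.2]

lemma gfun_slide {L : NNReal} {φ : EuclideanSpace ℝ (Fin n) → ℝ} (hφ : LipschitzWith L φ)
    (xb yb : EuclideanSpace ℝ (Fin n)) {t : ℝ}
    (h : t + (L:ℝ) * dist xb yb ≤ φ yb) :
    gfun φ yb (t + (L:ℝ) * dist xb yb) ≤ gfun φ xb t := by
  set r : ℝ := dist xb yb with hrdef
  have hr0 : 0 ≤ r := dist_nonneg
  by_contra hcon
  push_neg at hcon
  obtain ⟨z, hz, hzd⟩ := (Metric.infDist_lt_iff (graph_nonempty φ)).1 hcon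
  obtain ⟨w, rfl⟩ := hz
  -- find a graph point near Q := (t + L r, yb) at distance ≤ dist P z
  set w' : EuclideanSpace ℝ (Fin n) := w + (yb - xb) with hw'def
  have hw'yb : dist w' yb = dist w xb := by
    rw [dist_eq_norm, dist_eq_norm, hw'def]
    congr 1; module
  have hw'w : dist w' w = r := by
    rw [dist_eq_norm, hw'def, hrdef, dist_eq_norm, norm_sub_rev]
    congr 1; module
  have hφw' : |φ w' - φ w| ≤ (L:ℝ) * r := by
    have h1 := hφ.dist_le_mul w' w
    rw [Real.dist_eq, hw'w] at h1
    exact h1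
  have hQdist : ∃ z' ∈ graphSet n φ,
      dist (mkPt n (t + (L:ℝ)*r) yb) z' ≤ dist (mkPt n t xb) (mkPt n (φ w) w) := by
    rcases le_total (φ w') (t + (L:ℝ)*r) with hcase | hcase
    · -- IVT between w' and yb
      obtain ⟨w'', hw''val, hw''d⟩ := seg_ivt hφ.continuous w' yb hcase h
      refine ⟨mkPt n (φ w'') w'', ⟨w'', rfl⟩, ?_⟩
      rw [dist_mkPt, dist_mkPt, hw''val]
      have : (t + (L:ℝ)*r - (t + (L:ℝ)*r))^2 = 0 := by ring
      rw [this, zero_add]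
      calc Real.sqrt (dist yb w'' ^ 2) = dist yb w'' := by
            rw [Real.sqrt_sq_eq_abs, abs_of_nonneg dist_nonneg]
        _ ≤ dist xb w := by rw [dist_comm yb w'', dist_comm xb w, ← hw'yb]; exact hw''d
        _ ≤ Real.sqrt ((t - φ w)^2 + dist xb w^2) := by
            apply Real.le_sqrt_of_sq_le
            nlinarith [sq_nonneg (t - φ w)]
    · refine ⟨mkPt n (φ w') w', ⟨w', rfl⟩, ?_⟩
      rw [dist_mkPt, dist_mkPt]
      apply Real.sqrt_le_sqrt
      have hub : φ w' - (t + (L:ℝ)*r) ≤ φ w - t := by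
        have := (abs_le.1 hφw').2
        linarith
      have hlb : 0 ≤ φ w' - (t + (L:ℝ)*r) := by linarith
      have h1 : (t + (L:ℝ)*r - φ w')^2 ≤ (t - φ w)^2 := by
        have hwt : 0 ≤ φ w - t := by linarith
        nlinarith
      have h2 : dist yb w' = dist xb w := by
        rw [dist_comm yb w', dist_comm xb w, hw'yb]
      rw [h2]
      linarith
  obtain ⟨z', hz', hz'd⟩ := hQdist
  have : gfun φ yb (t + (L:ℝ)*r) ≤ dist (mkPt n (t + (L:ℝ)*r) yb) z' :=
    Metric.infDist_le_dist_of_mem hz'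
  linarith

lemma psi_lip_oneside {L : NNReal} {φ : EuclideanSpace ℝ (Fin n) → ℝ} (hφ : LipschitzWith L φ)
    {δ : ℝ} (hδ : 0 < δ) (xb yb : EuclideanSpace ℝ (Fin n)) :
    psiOff n φ δ yb ≤ psiOff n φ δ xb + (L:ℝ) * dist xb yb := by
  set r : ℝ := dist xb yb with hrdef
  rcases le_total (psiOff n φ δ xb + (L:ℝ)*r) (φ yb) with hcase | hcase
  · have hroot : gfun φ yb (psiOff n φ δ xb + (L:ℝ)*r) ≤ δ := by
      have hmem := psi_mem hφ hδ xb
      have hval : gfun φ xb (psiOff n φ δ xb) = δ := hmem.1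
      calc gfun φ yb (psiOff n φ δ xb + (L:ℝ)*r) ≤ gfun φ xb (psiOff n φ δ xb) :=
            gfun_slide hφ xb yb hcase
        _ = δ := hval
    exact psi_le_of_root hφ hδ yb hcase hroot
  · calc psiOff n φ δ yb ≤ φ yb - δ := psi_le hφ hδ yb
      _ ≤ psiOff n φ δ xb + (L:ℝ)*r := by linarith

lemma psi_lip {L : NNReal} {φ : EuclideanSpace ℝ (Fin n) → ℝ} (hφ : LipschitzWith L φ)
    {δ : ℝ} (hδ : 0 < δ) (xb yb : EuclideanSpace ℝ (Fin n)) :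
    |psiOff n φ δ xb - psiOff n φ δ yb| ≤ (L:ℝ) * dist xb yb := by
  rw [abs_sub_le_iff]
  constructor
  · have := psi_lip_oneside hφ hδ yb xb
    rw [dist_comm] at this
    linarith
  · have := psi_lip_oneside hφ hδ xb yb
    linarith


lemma abs_sub_le' (a b : ℝ) : |a - b| ≤ |a| + |b| := by
  calc |a - b| = |a + (-b)| := by ring_nf
    _ ≤ |a| + |-b| := abs_add_le _ _
    _ = |a| + |b| := by rw [abs_neg]

lemma dF_bounds {Lr S δ tx ty φx φy ψx ψy r : ℝ}
    (hδ : 0 < δ) (hL : 0 ≤ Lr) (hS1 : 1 ≤ S) (hr : 0 ≤ r)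
    (htx1 : -δ < tx) (htx2 : tx < 0) (hty1 : -δ < ty) (hty2 : ty < 0)
    (hφd : |φx - φy| ≤ Lr * r) (hψd : |ψx - ψy| ≤ Lr * r)
    (hux1 : δ ≤ φx - ψx) (hux2 : φx - ψx ≤ δ * S)
    (huy1 : δ ≤ φy - ψy) (huy2 : φy - ψy ≤ δ * S) :
    |((1 + tx/δ) * φx - (tx/δ) * ψx) - ((1 + ty/δ) * φy - (ty/δ) * ψy)|
      ≤ 3 * Lr * r + S * |tx - ty|
    ∧ |tx - ty| - 3 * Lr * r
      ≤ |((1 + tx/δ) * φx - (tx/δ) * ψx) - ((1 + ty/δ) * φy - (ty/δ) * ψy)| := by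
  have hδ' : δ ≠ 0 := ne_of_gt hδ
  set DF : ℝ := ((1 + tx/δ) * φx - (tx/δ) * ψx) - ((1 + ty/δ) * φy - (ty/δ) * ψy) with hDFdef
  have hsplit : DF = (φx - φy) + (tx/δ) * ((φx - ψx) - (φy - ψy)) + ((tx - ty)/δ) * (φy - ψy) := by
    rw [hDFdef]; field_simp; ring
  have htxd : |tx/δ| ≤ 1 := by
    rw [abs_div, abs_of_pos hδ, div_le_one hδ, abs_of_neg htx2]
    linarith
  have hdu : |(φx - ψx) - (φy - ψy)| ≤ 2 * Lr * r := by
    have h1 : (φx - ψx) - (φy - ψy) = (φx - φy) - (ψx - ψy) := by ring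
    rw [h1]
    calc |(φx - φy) - (ψx - ψy)| ≤ |φx - φy| + |ψx - ψy| := abs_sub_le' _ _
      _ ≤ 2 * Lr * r := by linarith
  have hT2 : |(tx/δ) * ((φx - ψx) - (φy - ψy))| ≤ 2 * Lr * r := by
    rw [abs_mul]
    calc |tx/δ| * |(φx - ψx) - (φy - ψy)| ≤ 1 * (2 * Lr * r) :=
          mul_le_mul htxd hdu (abs_nonneg _) zero_le_one
      _ = 2 * Lr * r := by ring
  have hT3 : |((tx - ty)/δ) * (φy - ψy)| = (|tx - ty| / δ) * (φy - ψy) := by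
    rw [abs_mul, abs_div, abs_of_pos hδ, abs_of_nonneg (by linarith : (0:ℝ) ≤ φy - ψy)]
  have hA0 : 0 ≤ |tx - ty| := abs_nonneg _
  have hT3u : |((tx - ty)/δ) * (φy - ψy)| ≤ S * |tx - ty| := by
    rw [hT3]
    calc (|tx - ty| / δ) * (φy - ψy) ≤ (|tx - ty| / δ) * (δ * S) :=
          mul_le_mul_of_nonneg_left huy2 (by positivity)
      _ = S * |tx - ty| := by field_simp
  have hT3l : |tx - ty| ≤ |((tx - ty)/δ) * (φy - ψy)| := by
    rw [hT3]
    calc |tx - ty| = (|tx - ty| / δ) * δ := by field_simp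
      _ ≤ (|tx - ty| / δ) * (φy - ψy) := mul_le_mul_of_nonneg_left huy1 (by positivity)
  constructor
  · rw [hsplit]
    calc |(φx - φy) + (tx/δ) * ((φx - ψx) - (φy - ψy)) + ((tx - ty)/δ) * (φy - ψy)|
        ≤ |(φx - φy) + (tx/δ) * ((φx - ψx) - (φy - ψy))| + |((tx - ty)/δ) * (φy - ψy)| :=
          abs_add_le _ _
      _ ≤ (|φx - φy| + |(tx/δ) * ((φx - ψx) - (φy - ψy))|) + |((tx - ty)/δ) * (φy - ψy)| := by
          linarith [abs_add_le (φx - φy) ((tx/δ) * ((φx - ψx) - (φy - ψy)))]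
      _ ≤ 3 * Lr * r + S * |tx - ty| := by linarith
  · have h1 : |((tx - ty)/δ) * (φy - ψy)|
        ≤ |DF| + |(φx - φy) + (tx/δ) * ((φx - ψx) - (φy - ψy))| := by
      have h2 : ((tx - ty)/δ) * (φy - ψy)
          = DF - ((φx - φy) + (tx/δ) * ((φx - ψx) - (φy - ψy))) := by
        rw [hsplit]; ring
      rw [h2]
      exact abs_sub_le' _ _
    have h3 : |(φx - φy) + (tx/δ) * ((φx - ψx) - (φy - ψy))| ≤ 3 * Lr * r := by
      calc |(φx - φy) + (tx/δ) * ((φx - ψx) - (φy - ψy))|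
          ≤ |φx - φy| + |(tx/δ) * ((φx - ψx) - (φy - ψy))| := abs_add_le _ _
        _ ≤ 3 * Lr * r := by linarith
    linarith

end CollarAux

open CollarAux in
set_option maxHeartbeats 1000000 in
/-- the fiber-wise collar straightening map is bi-Lipschitz with
constants depending only on `L` (not on `δ`). -/
theorem collarMap_biLipschitz (n : ℕ) (hn : 1 ≤ n)
    (L : NNReal) (φ : EuclideanSpace ℝ (Fin n) → ℝ)
    (hφ0 : ∀ xb, 0 ≤ φ xb) (hφ : LipschitzWith L φ) :
    ∃ K K' : ℝ, 1 ≤ K ∧ 0 < K' ∧ K' ≤ 1 ∧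
      ∀ (δ : ℝ), 0 < δ →
        ∀ x y : EuclideanSpace ℝ (Fin (n + 1)),
          x ∈ stripe (n + 1) (Nat.succ_pos n) (-δ) 0 →
          y ∈ stripe (n + 1) (Nat.succ_pos n) (-δ) 0 →
          K' * dist x y
              ≤ dist (collarMap n φ (psiOff n φ δ) δ x) (collarMap n φ (psiOff n φ δ) δ y)
            ∧ dist (collarMap n φ (psiOff n φ δ) δ x) (collarMap n φ (psiOff n φ δ) δ y)
              ≤ K * dist x y := by
  have hL0 : (0:ℝ) ≤ (L:ℝ) := L.coe_nonneg
  set S : ℝ := Real.sqrt (1 + (L:ℝ)^2) with hSdef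
  have hS1 : (1:ℝ) ≤ S := by rw [hSdef, Real.one_le_sqrt]; nlinarith
  have hS0 : (0:ℝ) ≤ S := by linarith
  set K₁ : ℝ := 3*(L:ℝ) + S with hK₁def
  have hK₁1 : 1 ≤ K₁ := by rw [hK₁def]; linarith
  refine ⟨Real.sqrt (2*K₁^2 + 1), (Real.sqrt (4 + 36*(L:ℝ)^2))⁻¹, ?_, ?_, ?_, ?_⟩
  · rw [Real.one_le_sqrt]; nlinarith
  · rw [inv_pos, Real.sqrt_pos]; positivity
  · rw [inv_le_one_iff₀]
    right
    rw [Real.one_le_sqrt]; nlinarith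
  intro δ hδ x y hx hy
  obtain ⟨hx1, hx2⟩ := hx
  obtain ⟨hy1, hy2⟩ := hy
  have hidx : (⟨0, Nat.succ_pos n⟩ : Fin (n+1)) = 0 := rfl
  rw [hidx] at hx1 hx2 hy1 hy2
  set xb := tailPt n x with hxbdef
  set yb := tailPt n y with hybdef
  set r : ℝ := dist xb yb with hrdef
  have hr0 : (0:ℝ) ≤ r := dist_nonneg
  set Ψ := psiOff n φ δ with hΨdef
  set Fx : ℝ := (1 + x 0 / δ) * φ xb - (x 0 / δ) * Ψ xb with hFxdef
  set Fy : ℝ := (1 + y 0 / δ) * φ yb - (y 0 / δ) * Ψ yb with hFydef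
  have hdc : dist (collarMap n φ Ψ δ x) (collarMap n φ Ψ δ y)
      = Real.sqrt ((Fx - Fy)^2 + r^2) := dist_mkPt Fx Fy xb yb
  have hdxy : dist x y = Real.sqrt ((x 0 - y 0)^2 + r^2) := by
    conv_lhs => rw [← mkPt_eta x, ← mkPt_eta y]
    exact dist_mkPt _ _ _ _
  -- sandwich bounds for φ - Ψ
  have hux1 : δ ≤ φ xb - Ψ xb := by have := psi_le hφ hδ xb; rw [← hΨdef] at this; linarith
  have hux2 : φ xb - Ψ xb ≤ δ * S := by
    have := le_psi hφ hδ xb; rw [← hΨdef, ← hSdef] at this; linarith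
  have huy1 : δ ≤ φ yb - Ψ yb := by have := psi_le hφ hδ yb; rw [← hΨdef] at this; linarith
  have huy2 : φ yb - Ψ yb ≤ δ * S := by
    have := le_psi hφ hδ yb; rw [← hΨdef, ← hSdef] at this; linarith
  have hφd : |φ xb - φ yb| ≤ (L:ℝ) * r := by
    have := hφ.dist_le_mul xb yb
    rw [Real.dist_eq] at this
    exact this
  have hψd : |Ψ xb - Ψ yb| ≤ (L:ℝ) * r := by
    have := psi_lip hφ hδ xb yb
    rw [← hΨdef] at this
    exact this
  have hbounds := dF_bounds hδ hL0 hS1 hr0 hx1 hx2 hy1 hy2 hφd hψd hux1 hux2 huy1 huy2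
  rw [← hFxdef, ← hFydef] at hbounds
  obtain ⟨hup, hlo⟩ := hbounds
  set A : ℝ := |x 0 - y 0| with hAdef
  have hA0 : 0 ≤ A := abs_nonneg _
  have hAsq : A^2 = (x 0 - y 0)^2 := sq_abs _
  have hDFsq : (Fx - Fy)^2 = |Fx - Fy|^2 := (sq_abs _).symm
  clear_value xb yb r Ψ Fx Fy A S K₁
  clear hφd hψd hux1 hux2 huy1 huy2 hidx hΨdef hxbdef hybdef hFxdef hFydef
  constructor
  · -- lower bound
    rw [hdc, hdxy]
    have h1 : (Real.sqrt (4 + 36*(L:ℝ)^2))⁻¹ = Real.sqrt ((4 + 36*(L:ℝ)^2)⁻¹) := by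
      rw [Real.sqrt_inv]
    rw [h1, ← Real.sqrt_mul (by positivity) ((x 0 - y 0)^2 + r^2)]
    apply Real.sqrt_le_sqrt
    rw [← hAsq, inv_mul_le_iff₀ (by positivity : (0:ℝ) < 4 + 36*(L:ℝ)^2)]
    rcases le_total A (6*(L:ℝ)*r) with hcase | hcase
    · have hA36 : A^2 ≤ 36*(L:ℝ)^2*r^2 := by nlinarith
      nlinarith [sq_nonneg (Fx - Fy), sq_nonneg r,
        mul_nonneg (sq_nonneg (L:ℝ)) (sq_nonneg (Fx - Fy))]
    · have h2 : A/2 ≤ A - 3*(L:ℝ)*r := by linarith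
      have h3 : (0:ℝ) ≤ A/2 := by linarith
      have h4 : (A/2)*(A/2) ≤ |Fx - Fy| * |Fx - Fy| :=
        mul_self_le_mul_self h3 (le_trans h2 hlo)
      have h5 : |Fx - Fy| * |Fx - Fy| = (Fx - Fy)^2 := by rw [abs_mul_abs_self]; ring
      rw [h5] at h4
      nlinarith [sq_nonneg r, mul_nonneg (sq_nonneg (L:ℝ)) (sq_nonneg (Fx - Fy)),
        mul_nonneg (sq_nonneg (L:ℝ)) (sq_nonneg r)]
  · -- upper bound
    rw [hdc, hdxy]
    rw [← Real.sqrt_mul (by positivity : (0:ℝ) ≤ 2*K₁^2 + 1) ((x 0 - y 0)^2 + r^2)]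
    apply Real.sqrt_le_sqrt
    rw [← hAsq]
    have h6 : |Fx - Fy| * |Fx - Fy| ≤ (3*(L:ℝ)*r + S*A)*(3*(L:ℝ)*r + S*A) :=
      mul_self_le_mul_self (abs_nonneg _) hup
    have h5 : |Fx - Fy| * |Fx - Fy| = (Fx - Fy)^2 := by rw [abs_mul_abs_self]; ring
    rw [h5] at h6
    have hK₁sq : K₁^2 = 9*(L:ℝ)^2 + 6*(L:ℝ)*S + S^2 := by rw [hK₁def]; ring
    nlinarith [sq_nonneg (3*(L:ℝ)*r - S*A), sq_nonneg r, sq_nonneg A,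
      mul_nonneg (mul_nonneg hL0 hS0) (add_nonneg (sq_nonneg r) (sq_nonneg A)),
      mul_nonneg (mul_nonneg hL0 hS0) (sq_nonneg r),
      mul_nonneg (mul_nonneg hL0 hS0) (sq_nonneg A)]
end
end

section
/- Kernel domination under graph straightening: let M = max(L + 1 + √(L²+1), K_L) with K_L as in the bi-Lipschitz lemma. For x, y ∈ R^∞ = (0,∞) × ℝ^{d-1}, set z = (t_x + φ(x̄), x̄) and w = (t_y + φ(ȳ), ȳ). Then γ_{δ/M}^β(|x - y|) ≤ M^{d+p} γ_δ^β(|z - w|). Analogous estimates hold when x ∈ R_{-δ} (with z replaced by x' from the collar map) and when both x, y ∈ R_{-δ}. -/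
open MeasureTheory Real Set Filter

noncomputable section

/-- The graph-shift map sending `x = (t, xb)` with `t > 0` to `(t + φ(xb), xb)`. -/
def shiftMap (n : ℕ) (φ : EuclideanSpace ℝ (Fin n) → ℝ)
    (x : EuclideanSpace ℝ (Fin (n + 1))) : EuclideanSpace ℝ (Fin (n + 1)) :=
  mkPt n (x 0 + φ (tailPt n x)) (tailPt n x)

section Aux

variable {n : ℕ}

lemma my_le_infDist {α : Type*} [PseudoMetricSpace α] {s : Set α} (hs : s.Nonempty) {x : α} {b : ℝ}
    (h : ∀ y ∈ s, b ≤ dist x y) : b ≤ Metric.infDist x s := by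
  by_contra h'
  push_neg at h'
  rw [Metric.infDist_lt_iff hs] at h'
  obtain ⟨y, hy, hlt⟩ := h'
  exact absurd (h y hy) (not_le.2 hlt)

lemma mkPt_zero (t : ℝ) (xb : EuclideanSpace ℝ (Fin n)) : mkPt n t xb 0 = t := rfl

lemma mkPt_succ (t : ℝ) (xb : EuclideanSpace ℝ (Fin n)) (i : Fin n) :
    mkPt n t xb i.succ = xb i := by
  simp [mkPt]

lemma tailPt_mkPt (t : ℝ) (xb : EuclideanSpace ℝ (Fin n)) : tailPt n (mkPt n t xb) = xb := by
  ext i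
  simp [tailPt, mkPt]

lemma mkPt_tailPt (x : EuclideanSpace ℝ (Fin (n + 1))) : mkPt n (x 0) (tailPt n x) = x := by
  ext i
  refine Fin.cases ?_ ?_ i
  · rfl
  · intro j; simp [mkPt, tailPt]

lemma dist_sq_mkPt (t s : ℝ) (xb yb : EuclideanSpace ℝ (Fin n)) :
    dist (mkPt n t xb) (mkPt n s yb) ^ 2 = (t - s) ^ 2 + dist xb yb ^ 2 := by
  rw [EuclideanSpace.dist_eq, EuclideanSpace.dist_eq]
  rw [Real.sq_sqrt (by positivity), Real.sq_sqrt (by positivity)]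
  rw [Fin.sum_univ_succ]
  simp only [mkPt_zero, mkPt_succ]
  rw [Real.dist_eq, sq_abs]

lemma dist_mkPt_nonneg_decomp (t s : ℝ) (xb yb : EuclideanSpace ℝ (Fin n)) :
    dist (mkPt n t xb) (mkPt n s yb) = Real.sqrt ((t - s) ^ 2 + dist xb yb ^ 2) := by
  rw [← dist_sq_mkPt, Real.sqrt_sq dist_nonneg]

lemma dist_sq_decomp (x y : EuclideanSpace ℝ (Fin (n + 1))) :
    dist x y ^ 2 = (x 0 - y 0) ^ 2 + dist (tailPt n x) (tailPt n y) ^ 2 := by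
  conv_lhs => rw [← mkPt_tailPt x, ← mkPt_tailPt y]
  exact dist_sq_mkPt _ _ _ _

lemma dist_mkPt_same (t s : ℝ) (xb : EuclideanSpace ℝ (Fin n)) :
    dist (mkPt n t xb) (mkPt n s xb) = |t - s| := by
  rw [dist_mkPt_nonneg_decomp]
  simp [Real.sqrt_sq_eq_abs]

lemma abs_coord_le_dist (x y : EuclideanSpace ℝ (Fin (n + 1))) : |x 0 - y 0| ≤ dist x y := by
  have h := dist_sq_decomp x y
  nlinarith [dist_nonneg (x := x) (y := y), sq_abs (x 0 - y 0), dist_nonneg (x := tailPt n x) (y := tailPt n y), sq_nonneg (dist (tailPt n x) (tailPt n y))]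

lemma dist_tail_le_dist (x y : EuclideanSpace ℝ (Fin (n + 1))) :
    dist (tailPt n x) (tailPt n y) ≤ dist x y := by
  have h := dist_sq_decomp x y
  nlinarith [dist_nonneg (x := x) (y := y), dist_nonneg (x := tailPt n x) (y := tailPt n y), sq_nonneg (x 0 - y 0)]

lemma dist_le_abs_add (x y : EuclideanSpace ℝ (Fin (n + 1))) :
    dist x y ≤ |x 0 - y 0| + dist (tailPt n x) (tailPt n y) := by
  have h := dist_sq_decomp x y
  nlinarith [dist_nonneg (x := x) (y := y), abs_nonneg (x 0 - y 0), dist_nonneg (x := tailPt n x) (y := tailPt n y), sq_abs (x 0 - y 0)]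

end Aux
section GD

variable {n : ℕ} {L : NNReal} {φ : EuclideanSpace ℝ (Fin n) → ℝ}

/-- distance from the point `(t, xb)` to the graph of `φ`. -/
def gD (n : ℕ) (φ : EuclideanSpace ℝ (Fin n) → ℝ) (xb : EuclideanSpace ℝ (Fin n)) (t : ℝ) : ℝ :=
  Metric.infDist (mkPt n t xb) (graphSet n φ)

lemma graph_nonempty : (graphSet n φ).Nonempty := ⟨mkPt n (φ 0) 0, 0, rfl⟩

lemma mem_graph (zb : EuclideanSpace ℝ (Fin n)) : mkPt n (φ zb) zb ∈ graphSet n φ := ⟨zb, rfl⟩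

lemma lipschitz_coord0 : LipschitzWith 1 (fun z : EuclideanSpace ℝ (Fin (n + 1)) => z 0) := by
  refine LipschitzWith.of_dist_le_mul fun x y => ?_
  rw [Real.dist_eq, NNReal.coe_one, one_mul]
  exact abs_coord_le_dist x y

lemma lipschitz_tail : LipschitzWith 1 (tailPt n) := by
  refine LipschitzWith.of_dist_le_mul fun x y => ?_
  rw [NNReal.coe_one, one_mul]
  exact dist_tail_le_dist x y

lemma graph_closed (hφ : LipschitzWith L φ) : IsClosed (graphSet n φ) := by
  have : graphSet n φ = {z : EuclideanSpace ℝ (Fin (n + 1)) | z 0 = φ (tailPt n z)} := by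
    ext z
    constructor
    · rintro ⟨xb, rfl⟩
      simp [mkPt_zero, tailPt_mkPt]
    · intro hz
      exact ⟨tailPt n z, by rw [← hz, mkPt_tailPt]⟩
  rw [this]
  exact isClosed_eq (lipschitz_coord0.continuous)
    (hφ.continuous.comp lipschitz_tail.continuous)

lemma gD_cont (xb : EuclideanSpace ℝ (Fin n)) : Continuous (gD n φ xb) := by
  have h1 : Isometry (fun t : ℝ => mkPt n t xb) := by
    refine Isometry.of_dist_eq fun t s => ?_
    rw [dist_mkPt_same, Real.dist_eq]
  exact (Metric.continuous_infDist_pt (graphSet n φ)).comp h1.continuous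

lemma gD_le (xb zb : EuclideanSpace ℝ (Fin n)) (t : ℝ) :
    gD n φ xb t ≤ Real.sqrt ((φ zb - t) ^ 2 + dist xb zb ^ 2) := by
  have := Metric.infDist_le_dist_of_mem (mem_graph (φ := φ) zb) (x := mkPt n t xb)
  rwa [dist_mkPt_nonneg_decomp, show (t - φ zb) ^ 2 = (φ zb - t) ^ 2 by ring] at this

lemma gD_le_abs (xb : EuclideanSpace ℝ (Fin n)) (t : ℝ) : gD n φ xb t ≤ |φ xb - t| := by
  have := gD_le (φ := φ) xb xb t
  simpa [Real.sqrt_sq_eq_abs] using this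

lemma gD_nonneg (xb : EuclideanSpace ℝ (Fin n)) (t : ℝ) : 0 ≤ gD n φ xb t :=
  Metric.infDist_nonneg

lemma gD_lb (hφ : LipschitzWith L φ) (xb : EuclideanSpace ℝ (Fin n)) {t : ℝ} (ht : t ≤ φ xb) :
    φ xb - t ≤ Real.sqrt ((L : ℝ) ^ 2 + 1) * gD n φ xb t := by
  set S : ℝ := Real.sqrt ((L : ℝ) ^ 2 + 1) with hS
  have hSsq : S ^ 2 = (L : ℝ) ^ 2 + 1 := Real.sq_sqrt (by positivity)
  have hS1 : 1 ≤ S := by nlinarith [Real.sqrt_nonneg ((L : ℝ) ^ 2 + 1), sq_nonneg ((L : ℝ))]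
  have hS0 : 0 < S := lt_of_lt_of_le one_pos hS1
  rw [← div_le_iff₀' hS0]
  refine my_le_infDist graph_nonempty ?_
  rintro w ⟨zb, rfl⟩
  rw [dist_mkPt_nonneg_decomp, show (t - φ zb) ^ 2 = (φ zb - t) ^ 2 by ring]
  set a : ℝ := φ zb - t
  set b : ℝ := dist xb zb
  have hb0 : 0 ≤ b := dist_nonneg
  have hh0 : 0 ≤ φ xb - t := by linarith
  have hlip : φ xb - φ zb ≤ (L : ℝ) * b := by
    have := hφ.dist_le_mul xb zb
    rw [Real.dist_eq] at this
    calc φ xb - φ zb ≤ |φ xb - φ zb| := le_abs_self _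
    _ ≤ (L : ℝ) * b := this
  have ha : φ xb - t ≤ a + (L : ℝ) * b := by simp only [a]; linarith
  have hkey : (φ xb - t) ^ 2 ≤ ((L : ℝ) ^ 2 + 1) * (a ^ 2 + b ^ 2) := by
    nlinarith [sq_nonneg ((L : ℝ) * b - a), sq_nonneg ((L : ℝ) * a - b), hh0, ha,
      mul_nonneg (NNReal.coe_nonneg L) hb0]
  rw [div_le_iff₀ hS0]
  calc φ xb - t ≤ Real.sqrt ((φ xb - t) ^ 2) := by rw [Real.sqrt_sq hh0]
  _ ≤ Real.sqrt (((L : ℝ) ^ 2 + 1) * (a ^ 2 + b ^ 2)) := Real.sqrt_le_sqrt hkey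
  _ = S * Real.sqrt (a ^ 2 + b ^ 2) := by
      rw [← hSsq, Real.sqrt_mul (by positivity)]
      rw [Real.sqrt_sq hS0.le]
  _ = Real.sqrt (a ^ 2 + b ^ 2) * S := mul_comm _ _

lemma gD_self (xb : EuclideanSpace ℝ (Fin n)) : gD n φ xb (φ xb) = 0 :=
  Metric.infDist_zero_of_mem (mem_graph xb)

lemma gD_anti (hφ : LipschitzWith L φ) (xb : EuclideanSpace ℝ (Fin n)) {t t' : ℝ}
    (h1 : t' ≤ t) (h2 : t ≤ φ xb) : gD n φ xb t ≤ gD n φ xb t' := by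
  refine my_le_infDist graph_nonempty ?_
  rintro w ⟨zb, rfl⟩
  rw [dist_mkPt_nonneg_decomp, show (t' - φ zb) ^ 2 = (φ zb - t') ^ 2 by ring]
  by_cases hz : t ≤ φ zb
  · refine le_trans (gD_le xb zb t) (Real.sqrt_le_sqrt ?_)
    have : (φ zb - t) ^ 2 ≤ (φ zb - t') ^ 2 := by nlinarith
    linarith
  · push_neg at hz
    -- use IVT on the segment from xb to zb
    set f : ℝ → ℝ := fun s => φ (xb + s • (zb - xb)) with hf
    have hfc : Continuous f := by
      apply hφ.continuous.comp
      exact continuous_const.add (continuous_id.smul continuous_const)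
    have hf0 : f 0 = φ xb := by simp [hf]
    have hf1 : f 1 = φ zb := by simp [hf]
    have hmem : t ∈ Set.Icc (f 1) (f 0) := by
      rw [hf0, hf1]; exact ⟨hz.le, h2⟩
    obtain ⟨s, hs01, hfs⟩ := intermediate_value_Icc' zero_le_one hfc.continuousOn hmem
    set c := xb + s • (zb - xb) with hc
    have hdxc : dist xb c = s * dist xb zb := by
      rw [hc, dist_self_add_right, norm_smul, Real.norm_eq_abs, abs_of_nonneg hs01.1,
        ← dist_eq_norm']
    have hgc : gD n φ xb t ≤ dist xb c := by
      have := gD_le (φ := φ) xb c t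
      have hφc : φ c = t := hfs
      rwa [hφc, sub_self, show (0:ℝ)^2 = 0 by ring, zero_add, Real.sqrt_sq dist_nonneg] at this
    calc gD n φ xb t ≤ dist xb c := hgc
    _ ≤ dist xb zb := by
        rw [hdxc]
        nlinarith [dist_nonneg (x := xb) (y := zb), hs01.1, hs01.2]
    _ ≤ Real.sqrt ((φ zb - t') ^ 2 + dist xb zb ^ 2) := by
        calc dist xb zb = Real.sqrt (dist xb zb ^ 2) := (Real.sqrt_sq dist_nonneg).symm
        _ ≤ _ := Real.sqrt_le_sqrt (by nlinarith [sq_nonneg (φ zb - t')])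

end GD
section Psi

variable {n : ℕ} {L : NNReal} {φ : EuclideanSpace ℝ (Fin n) → ℝ}

/-- `√(L²+1)`. -/
def sqc (L : NNReal) : ℝ := Real.sqrt ((L : ℝ) ^ 2 + 1)

lemma sqc_sq (L : NNReal) : sqc L ^ 2 = (L : ℝ) ^ 2 + 1 := Real.sq_sqrt (by positivity)

lemma one_le_sqc (L : NNReal) : 1 ≤ sqc L := by
  have h1 := sqc_sq L
  have h2 : 0 ≤ sqc L := Real.sqrt_nonneg _
  nlinarith [sq_nonneg ((L : ℝ))]

lemma sqc_pos (L : NNReal) : 0 < sqc L := lt_of_lt_of_le one_pos (one_le_sqc L)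

lemma gD_lb' (hφ : LipschitzWith L φ) (xb : EuclideanSpace ℝ (Fin n)) {t : ℝ} (ht : t ≤ φ xb) :
    φ xb - t ≤ sqc L * gD n φ xb t := gD_lb hφ xb ht

lemma offset_bounds (hφ : LipschitzWith L φ) {δ : ℝ} (hδ : 0 < δ)
    {xb : EuclideanSpace ℝ (Fin n)} {t : ℝ} (ht : t ∈ offsetLevels n φ δ xb) :
    φ xb - δ * sqc L ≤ t ∧ t ≤ φ xb - δ := by
  obtain ⟨hg, hlt⟩ := ht
  have hg' : gD n φ xb t = δ := hg
  constructor
  · have := gD_lb' hφ xb hlt.le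
    rw [hg'] at this
    nlinarith
  · have := gD_le_abs (φ := φ) xb t
    rw [hg', abs_of_pos (by linarith : 0 < φ xb - t)] at this
    linarith

lemma gD_ge_delta (hφ : LipschitzWith L φ) {δ : ℝ} (hδ : 0 < δ)
    (xb : EuclideanSpace ℝ (Fin n)) {t : ℝ} (ht : t ≤ φ xb - δ * sqc L) :
    δ ≤ gD n φ xb t := by
  have h1 : t ≤ φ xb := by nlinarith [one_le_sqc L]
  have h2 := gD_lb' hφ xb h1
  have h3 : δ * sqc L ≤ φ xb - t := by linarith
  have := sqc_pos L
  nlinarith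

lemma offset_nonempty (hφ : LipschitzWith L φ) {δ : ℝ} (hδ : 0 < δ)
    (xb : EuclideanSpace ℝ (Fin n)) : (offsetLevels n φ δ xb).Nonempty := by
  set t₁ := φ xb - δ * sqc L with ht₁
  have hle : t₁ ≤ φ xb := by nlinarith [one_le_sqc L, sqc_pos L]
  have hup : gD n φ xb (φ xb) = 0 := gD_self xb
  have hlo : δ ≤ gD n φ xb t₁ := gD_ge_delta hφ hδ xb le_rfl
  have hmem : δ ∈ Set.Icc (gD n φ xb (φ xb)) (gD n φ xb t₁) := ⟨by rw [hup]; exact hδ.le, hlo⟩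
  obtain ⟨t, hts, hgt⟩ := intermediate_value_Icc' hle (gD_cont xb).continuousOn hmem
  refine ⟨t, hgt, lt_of_le_of_ne hts.2 ?_⟩
  intro h
  rw [h, hup] at hgt
  exact absurd hgt.symm (ne_of_gt hδ)

lemma offset_bddBelow (hφ : LipschitzWith L φ) {δ : ℝ} (hδ : 0 < δ)
    (xb : EuclideanSpace ℝ (Fin n)) : BddBelow (offsetLevels n φ δ xb) :=
  ⟨φ xb - δ * sqc L, fun t ht => (offset_bounds hφ hδ ht).1⟩

lemma offset_closed (hφ : LipschitzWith L φ) {δ : ℝ} (hδ : 0 < δ)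
    (xb : EuclideanSpace ℝ (Fin n)) : IsClosed (offsetLevels n φ δ xb) := by
  have : offsetLevels n φ δ xb = {t | gD n φ xb t = δ} ∩ Set.Iic (φ xb - δ) := by
    ext t
    constructor
    · intro ht
      exact ⟨ht.1, (offset_bounds hφ hδ ht).2⟩
    · rintro ⟨h1, h2⟩
      exact ⟨h1, by simp only [Set.mem_Iic] at h2; linarith⟩
  rw [this]
  exact (isClosed_eq (gD_cont xb) continuous_const).inter isClosed_Iic

lemma psi_mem (hφ : LipschitzWith L φ) {δ : ℝ} (hδ : 0 < δ) (xb : EuclideanSpace ℝ (Fin n)) :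
    psiOff n φ δ xb ∈ offsetLevels n φ δ xb :=
  (offset_closed hφ hδ xb).csInf_mem (offset_nonempty hφ hδ xb) (offset_bddBelow hφ hδ xb)

lemma psi_g (hφ : LipschitzWith L φ) {δ : ℝ} (hδ : 0 < δ) (xb : EuclideanSpace ℝ (Fin n)) :
    gD n φ xb (psiOff n φ δ xb) = δ := (psi_mem hφ hδ xb).1

lemma psi_le (hφ : LipschitzWith L φ) {δ : ℝ} (hδ : 0 < δ) (xb : EuclideanSpace ℝ (Fin n)) :
    psiOff n φ δ xb ≤ φ xb - δ := (offset_bounds hφ hδ (psi_mem hφ hδ xb)).2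

lemma psi_ge (hφ : LipschitzWith L φ) {δ : ℝ} (hδ : 0 < δ) (xb : EuclideanSpace ℝ (Fin n)) :
    φ xb - δ * sqc L ≤ psiOff n φ δ xb := (offset_bounds hφ hδ (psi_mem hφ hδ xb)).1

lemma psi_le_of (hφ : LipschitzWith L φ) {δ : ℝ} (hδ : 0 < δ)
    {yb : EuclideanSpace ℝ (Fin n)} {T : ℝ} (h1 : gD n φ yb T ≤ δ) (h2 : T ≤ φ yb - δ) :
    psiOff n φ δ yb ≤ T := by
  set t₁ := φ yb - δ * sqc L with ht₁
  have hT1 : t₁ ≤ T := by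
    by_contra h
    push_neg at h
    have := gD_ge_delta hφ hδ yb (le_of_lt h)
    have h4 : t₁ ≤ φ yb := by nlinarith [one_le_sqc L, sqc_pos L]
    have h5 := gD_lb' hφ yb (le_trans h.le h4)
    have := sqc_pos L
    nlinarith
  have hlo : δ ≤ gD n φ yb t₁ := gD_ge_delta hφ hδ yb le_rfl
  have hmem : δ ∈ Set.Icc (gD n φ yb T) (gD n φ yb t₁) := ⟨h1, hlo⟩
  obtain ⟨t, hts, hgt⟩ := intermediate_value_Icc' hT1 (gD_cont yb).continuousOn hmem
  have htm : t ∈ offsetLevels n φ δ yb := ⟨hgt, by have := hts.2; linarith⟩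
  exact le_trans (csInf_le (offset_bddBelow hφ hδ yb) htm) hts.2

end Psi
section Cone

variable {n : ℕ} {L : NNReal} {φ : EuclideanSpace ℝ (Fin n) → ℝ}

lemma seg_dist_left (xb wb : EuclideanSpace ℝ (Fin n)) {σ : ℝ} (h : 0 ≤ σ) :
    dist xb (xb + σ • (wb - xb)) = σ * dist xb wb := by
  rw [dist_self_add_right, norm_smul, Real.norm_eq_abs, abs_of_nonneg h, ← dist_eq_norm']

lemma seg_dist_right (xb wb : EuclideanSpace ℝ (Fin n)) {σ : ℝ} (h : σ ≤ 1) :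
    dist (xb + σ • (wb - xb)) wb = (1 - σ) * dist xb wb := by
  have hv : xb + σ • (wb - xb) - wb = (σ - 1) • (wb - xb) := by
    rw [sub_smul, one_smul]
    abel
  rw [dist_eq_norm, hv, norm_smul, Real.norm_eq_abs, abs_of_nonpos (by linarith),
    ← dist_eq_norm', dist_comm]
  ring

lemma seg_cont (xb wb : EuclideanSpace ℝ (Fin n)) (hφ : LipschitzWith L φ) :
    Continuous (fun σ : ℝ => φ (xb + σ • (wb - xb))) :=
  hφ.continuous.comp (continuous_const.add (continuous_id.smul continuous_const))

set_option maxHeartbeats 1000000 in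
/-- The touching-ball cone condition at a closest point on the graph. -/
lemma closest_point (hφ : LipschitzWith L φ) {δ : ℝ} (hδ : 0 < δ)
    (xb : EuclideanSpace ℝ (Fin n)) :
    ∃ wb : EuclideanSpace ℝ (Fin n),
      (φ wb - psiOff n φ δ xb) ^ 2 + dist xb wb ^ 2 = δ ^ 2 ∧
      dist xb wb ≤ (L : ℝ) * (φ wb - psiOff n φ δ xb) ∧
      δ ≤ (φ wb - psiOff n φ δ xb) * sqc L := by
  set ψ := psiOff n φ δ xb with hψdef
  obtain ⟨w, hwΓ, hdist⟩ :=
    (graph_closed hφ).exists_infDist_eq_dist graph_nonempty (mkPt n ψ xb)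
  obtain ⟨wb, rfl⟩ := hwΓ
  have hgψ : gD n φ xb ψ = δ := psi_g hφ hδ xb
  have hδd : δ = dist (mkPt n ψ xb) (mkPt n (φ wb) wb) := by rw [← hgψ]; exact hdist
  set a : ℝ := φ wb - ψ with ha_def
  set b : ℝ := dist xb wb with hb_def
  have hb0 : 0 ≤ b := dist_nonneg
  have hsum : a ^ 2 + b ^ 2 = δ ^ 2 := by
    have h := dist_sq_mkPt (n := n) ψ (φ wb) xb wb
    rw [← hδd] at h
    rw [ha_def, hb_def]
    linear_combination -h
  have hψφ : ψ ≤ φ xb - δ := psi_le hφ hδ xb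
  -- every point of the segment has φ-value above ψ
  have hseg : ∀ σ ∈ Set.Icc (0:ℝ) 1, ψ < φ (xb + σ • (wb - xb)) := by
    by_contra hcon
    push_neg at hcon
    obtain ⟨σ₀, hσ₀, hφσ₀⟩ := hcon
    have hf0 : ψ < φ (xb + (0:ℝ) • (wb - xb)) := by
      simp only [zero_smul, add_zero]
      linarith
    have hmem : ψ ∈ Set.Icc (φ (xb + σ₀ • (wb - xb))) (φ (xb + (0:ℝ) • (wb - xb))) :=
      ⟨hφσ₀, hf0.le⟩
    obtain ⟨σ₁, hσ₁m, hσ₁⟩ := intermediate_value_Icc' hσ₀.1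
      ((seg_cont xb wb hφ).continuousOn) hmem
    have hσ₁01 : σ₁ ∈ Set.Icc (0:ℝ) 1 := ⟨hσ₁m.1, le_trans hσ₁m.2 hσ₀.2⟩
    set c := xb + σ₁ • (wb - xb) with hc
    have hσ₁' : φ c = ψ := hσ₁
    have h1 : δ ≤ σ₁ * b := by
      have h2 : gD n φ xb ψ ≤ dist (mkPt n ψ xb) (mkPt n (φ c) c) :=
        Metric.infDist_le_dist_of_mem (mem_graph c)
      rw [hgψ, hσ₁', dist_mkPt_nonneg_decomp, sub_self] at h2
      rw [seg_dist_left xb wb hσ₁01.1] at h2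
      calc δ ≤ Real.sqrt (0 ^ 2 + (σ₁ * b) ^ 2) := h2
      _ = σ₁ * b := by
          rw [show (0:ℝ)^2 + (σ₁*b)^2 = (σ₁*b)^2 by ring, Real.sqrt_sq
            (mul_nonneg hσ₁01.1 hb0)]
    have hbδ' : b ≤ δ := by nlinarith [sq_nonneg a]
    have hδb : δ ≤ b := le_trans h1 (by nlinarith [hσ₁01.2, hσ₁01.1])
    have hbeq : b = δ := le_antisymm hbδ' hδb
    have hσeq : σ₁ = 1 := le_antisymm hσ₁01.2 (by nlinarith)
    have hφwb : φ wb = ψ := by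
      have hcw : c = wb := by rw [hc, hσeq, one_smul]; abel
      rw [← hcw, hσ₁']
    -- contradiction via σ* = L²/(L²+1)
    set ℓ : ℝ := (L : ℝ) with hℓ
    have hℓ0 : 0 ≤ ℓ := NNReal.coe_nonneg L
    have hden : (0:ℝ) < ℓ ^ 2 + 1 := by positivity
    set σs : ℝ := ℓ ^ 2 / (ℓ ^ 2 + 1) with hσs
    have hσs0 : 0 ≤ σs := by positivity
    have hσs1 : σs ≤ 1 := by rw [hσs, div_le_one hden]; linarith
    set cs := xb + σs • (wb - xb) with hcs
    have hlipcs : |φ cs - φ wb| ≤ ℓ * ((1 - σs) * b) := by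
      have h3 := hφ.dist_le_mul cs wb
      rw [Real.dist_eq, seg_dist_right xb wb hσs1] at h3
      exact h3
    have hinf : δ ^ 2 ≤ (φ cs - ψ) ^ 2 + (σs * b) ^ 2 := by
      have h2 : gD n φ xb ψ ≤ dist (mkPt n ψ xb) (mkPt n (φ cs) cs) :=
        Metric.infDist_le_dist_of_mem (mem_graph cs)
      rw [hgψ, dist_mkPt_nonneg_decomp, seg_dist_left xb wb hσs0] at h2
      have h3 := Real.sq_sqrt (by positivity : (0:ℝ) ≤ (ψ - φ cs) ^ 2 + (σs * dist xb wb) ^ 2)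
      nlinarith [hδ]
    rw [hφwb] at hlipcs
    have habs : (φ cs - ψ) ^ 2 ≤ ℓ ^ 2 * (1 - σs) ^ 2 * b ^ 2 := by
      nlinarith [sq_abs (φ cs - ψ), abs_nonneg (φ cs - ψ),
        mul_nonneg hℓ0 (mul_nonneg (by linarith : (0:ℝ) ≤ 1 - σs) hb0)]
    rw [hbeq] at habs hinf
    have hval : ℓ ^ 2 * (1 - σs) ^ 2 + σs ^ 2 = ℓ ^ 2 / (ℓ ^ 2 + 1) := by
      rw [hσs]
      field_simp
      ring
    have hlt1 : ℓ ^ 2 * (1 - σs) ^ 2 + σs ^ 2 < 1 := by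
      rw [hval, div_lt_one hden]
      linarith
    have h9 : δ ^ 2 ≤ (ℓ ^ 2 * (1 - σs) ^ 2 + σs ^ 2) * δ ^ 2 := by nlinarith [hinf, habs]
    nlinarith [h9, hlt1, mul_pos hδ hδ]
  -- φ wb > ψ
  have ha0 : 0 < a := by
    have h4 := hseg 1 ⟨zero_le_one, le_rfl⟩
    rw [one_smul, show xb + (wb - xb) = wb by abel] at h4
    rw [ha_def]
    linarith
  -- b ≤ L a
  have hbLa : b ≤ (L : ℝ) * a := by
    rcases eq_or_lt_of_le hb0 with hb | hb
    · rw [← hb]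
      positivity
    · have key : ∀ k : ℕ, 2 * b ^ 2 - 2 * a * (L : ℝ) * b ≤
          (1 / ((k : ℝ) + 1)) * ((L : ℝ) ^ 2 * b ^ 2 + b ^ 2) := by
        intro k
        set u : ℝ := 1 / ((k : ℝ) + 1) with hu
        have hu0 : 0 < u := by positivity
        have hu1 : u ≤ 1 := by
          rw [hu, div_le_one (by positivity)]
          simp
        have hs01 : (1 - u) ∈ Set.Icc (0:ℝ) 1 := ⟨by linarith, by linarith⟩
        set c := xb + (1 - u) • (wb - xb) with hc
        set q : ℝ := φ c - ψ with hq
        have hq0 : 0 < q := by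
          have h5 := hseg (1 - u) hs01
          rw [hq]; linarith
        have hq_ub : q ≤ a + (L : ℝ) * (u * b) := by
          have h6 := hφ.dist_le_mul c wb
          rw [Real.dist_eq, seg_dist_right xb wb hs01.2] at h6
          have h2 : φ c - φ wb ≤ (L : ℝ) * ((1 - (1 - u)) * b) := le_trans (le_abs_self _) h6
          rw [show (1 : ℝ) - (1 - u) = u by ring] at h2
          rw [hq, ha_def]
          linarith [h2]
        have hq_lb : δ ^ 2 ≤ q ^ 2 + (1 - u) ^ 2 * b ^ 2 := by
          have h2 : gD n φ xb ψ ≤ dist (mkPt n ψ xb) (mkPt n (φ c) c) :=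
            Metric.infDist_le_dist_of_mem (mem_graph c)
          rw [hgψ, dist_mkPt_nonneg_decomp, seg_dist_left xb wb hs01.1] at h2
          have h3 := Real.sq_sqrt
            (by positivity : (0:ℝ) ≤ (ψ - φ c) ^ 2 + ((1 - u) * dist xb wb) ^ 2)
          nlinarith [hδ]
        have hq2 : q ^ 2 ≤ (a + (L : ℝ) * (u * b)) ^ 2 := by nlinarith [hq_ub, hq0]
        have hexp : 2 * u * b ^ 2 - u ^ 2 * b ^ 2 ≤
            2 * a * (L : ℝ) * (u * b) + (L : ℝ) ^ 2 * u ^ 2 * b ^ 2 := by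
          nlinarith [hq2, hq_lb, hsum]
        have hmul : u * (2 * b ^ 2 - 2 * a * (L : ℝ) * b) ≤
            u * (u * ((L : ℝ) ^ 2 * b ^ 2 + b ^ 2)) := by nlinarith [hexp]
        exact le_of_mul_le_mul_left hmul hu0
      have htend : Filter.Tendsto
          (fun k : ℕ => (1 / ((k : ℝ) + 1)) * ((L : ℝ) ^ 2 * b ^ 2 + b ^ 2))
          Filter.atTop (nhds 0) := by
        have h7 := tendsto_one_div_add_atTop_nhds_zero_nat.mul_const
          ((L : ℝ) ^ 2 * b ^ 2 + b ^ 2)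
        rwa [zero_mul] at h7
      have hfin : 2 * b ^ 2 - 2 * a * (L : ℝ) * b ≤ 0 := ge_of_tendsto' htend key
      nlinarith [hb]
  refine ⟨wb, hsum, hbLa, ?_⟩
  have hS := sqc_sq L
  have hS0 := sqc_pos L
  rw [← ha_def]
  nlinarith [mul_self_le_mul_self hb0 hbLa, hsum, hS, mul_pos ha0 hS0, hδ,
    sq_nonneg (a * sqc L - δ), sq_nonneg (a * sqc L + δ)]

end Cone
section PsiLip

variable {n : ℕ} {L : NNReal} {φ : EuclideanSpace ℝ (Fin n) → ℝ}

/-- The Lipschitz constant of the offset function `ψ`. -/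
def CΨ (L : NNReal) : ℝ := (L : ℝ) + ((L : ℝ) ^ 2 + 1) * ((L : ℝ) + sqc L)

lemma CΨ_nonneg (L : NNReal) : 0 ≤ CΨ L := by
  have := sqc_pos L
  have := NNReal.coe_nonneg L
  unfold CΨ
  positivity

set_option maxHeartbeats 800000 in
lemma psi_lip_one_sided (hφ : LipschitzWith L φ) {δ : ℝ} (hδ : 0 < δ)
    (xb yb : EuclideanSpace ℝ (Fin n)) :
    psiOff n φ δ yb ≤ psiOff n φ δ xb + CΨ L * dist xb yb := by
  set S : ℝ := sqc L with hSdef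
  set c : ℝ := (L : ℝ) + S with hcdef
  have hS2 : S ^ 2 = (L : ℝ) ^ 2 + 1 := sqc_sq L
  have hS1 : 1 ≤ S := one_le_sqc L
  have hS0 : 0 < S := sqc_pos L
  have hL0 : 0 ≤ (L : ℝ) := NNReal.coe_nonneg L
  have hc0 : 0 < c := by rw [hcdef]; linarith
  set Δ : ℝ := dist xb yb with hΔdef
  have hΔ0 : 0 ≤ Δ := dist_nonneg
  have hCc : c ≤ CΨ L := by
    unfold CΨ
    rw [hcdef]
    nlinarith [mul_nonneg (sq_nonneg ((L:ℝ))) (by linarith : (0:ℝ) ≤ (L:ℝ) + S)]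
  have hφyx : φ yb ≥ φ xb - (L : ℝ) * Δ := by
    have h := hφ.dist_le_mul xb yb
    rw [Real.dist_eq] at h
    have := abs_le.1 h
    linarith [this.1]
  by_cases hcase : S * c * Δ ≤ δ
  · -- small distance case, use the cone condition
    obtain ⟨wb, hsum, hbLa, haS⟩ := closest_point hφ hδ xb
    set ψx : ℝ := psiOff n φ δ xb with hψx
    set a : ℝ := φ wb - ψx with ha_def
    set b : ℝ := dist xb wb with hb_def
    have hb0 : 0 ≤ b := dist_nonneg
    have ha0 : 0 < a := by
      by_contra h
      push_neg at h
      nlinarith [haS, hδ, mul_nonneg (neg_nonneg.2 h) hS0.le]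
    set T : ℝ := ψx + c * Δ with hT
    have hg : gD n φ yb T ≤ δ := by
      have h1 := gD_le (φ := φ) yb wb T
      have h2 : dist yb wb ≤ Δ + b := by
        calc dist yb wb ≤ dist yb xb + dist xb wb := dist_triangle _ _ _
        _ = Δ + b := by rw [dist_comm yb xb]
      have h3 : (φ wb - T) ^ 2 + dist yb wb ^ 2 ≤ δ ^ 2 := by
        have hfw : φ wb - T = a - c * Δ := by rw [hT, ha_def]; ring
        rw [hfw]
        have hc2 : c ^ 2 + 1 = 2 * S * c := by rw [hcdef]; linear_combination -hS2
        have hc2' : (c ^ 2 + 1) * Δ ^ 2 = 2 * S * c * Δ * Δ := by rw [hc2]; ring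
        have hpr1 : b * Δ ≤ (L : ℝ) * a * Δ := mul_le_mul_of_nonneg_right hbLa hΔ0
        have hpr2 : S * c * Δ * Δ ≤ a * S * Δ :=
          mul_le_mul_of_nonneg_right (le_trans hcase haS) hΔ0
        have hcla : a * Δ * c = a * Δ * (L : ℝ) + a * Δ * S := by rw [hcdef]; ring
        have h4 : dist yb wb ^ 2 ≤ (Δ + b) ^ 2 :=
          pow_le_pow_left₀ dist_nonneg h2 2
        nlinarith [hsum, hpr1, hpr2, hc2', h4, hcla]
      calc gD n φ yb T ≤ Real.sqrt ((φ wb - T) ^ 2 + dist yb wb ^ 2) := h1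
      _ ≤ Real.sqrt (δ ^ 2) := Real.sqrt_le_sqrt h3
      _ = δ := Real.sqrt_sq hδ.le
    by_cases hTle : T ≤ φ yb - δ
    · have := psi_le_of hφ hδ hg hTle
      rw [hT] at this
      have hcΔ : c * Δ ≤ CΨ L * Δ := mul_le_mul_of_nonneg_right hCc hΔ0
      linarith
    · push_neg at hTle
      have h5 : psiOff n φ δ yb ≤ φ yb - δ := psi_le hφ hδ yb
      rw [hT] at hTle
      have hcΔ : c * Δ ≤ CΨ L * Δ := mul_le_mul_of_nonneg_right hCc hΔ0
      linarith
  · -- large distance case, use the crude bounds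
    push_neg at hcase
    have h1 : psiOff n φ δ yb ≤ φ yb - δ := psi_le hφ hδ yb
    have h2 : φ xb - δ * S ≤ psiOff n φ δ xb := psi_ge hφ hδ xb
    have h3 : φ yb ≤ φ xb + (L : ℝ) * Δ := by
      have h := hφ.dist_le_mul xb yb
      rw [Real.dist_eq] at h
      have := abs_le.1 h
      linarith [this.2]
    have h4 : δ * S ≤ S * c * Δ * S := mul_le_mul_of_nonneg_right hcase.le hS0.le
    have hCψ : (L : ℝ) * Δ + S * c * Δ * S = CΨ L * Δ := by
      unfold CΨ
      rw [hcdef]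
      linear_combination (((L:ℝ) + S) * Δ) * hS2
    nlinarith [hδ, hS1, hS0]
lemma psi_dist_le (hφ : LipschitzWith L φ) {δ : ℝ} (hδ : 0 < δ)
    (xb yb : EuclideanSpace ℝ (Fin n)) :
    |psiOff n φ δ xb - psiOff n φ δ yb| ≤ CΨ L * dist xb yb := by
  rw [abs_le]
  constructor
  · have := psi_lip_one_sided hφ hδ (xb := xb) (yb := yb)
    linarith
  · have := psi_lip_one_sided hφ hδ (xb := yb) (yb := xb)
    rw [dist_comm] at this
    linarith

end PsiLip
section Maps

variable {n : ℕ} {L : NNReal} {φ : EuclideanSpace ℝ (Fin n) → ℝ}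

lemma dist_mkPt_le (t s : ℝ) (xb yb : EuclideanSpace ℝ (Fin n)) :
    dist (mkPt n t xb) (mkPt n s yb) ≤ |t - s| + dist xb yb := by
  have := dist_le_abs_add (mkPt n t xb) (mkPt n s yb)
  rwa [mkPt_zero, mkPt_zero, tailPt_mkPt, tailPt_mkPt] at this

lemma abs_le_dist_mkPt (t s : ℝ) (xb yb : EuclideanSpace ℝ (Fin n)) :
    |t - s| ≤ dist (mkPt n t xb) (mkPt n s yb) := by
  have := abs_coord_le_dist (mkPt n t xb) (mkPt n s yb)
  rwa [mkPt_zero, mkPt_zero] at this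

lemma dist_le_dist_mkPt (t s : ℝ) (xb yb : EuclideanSpace ℝ (Fin n)) :
    dist xb yb ≤ dist (mkPt n t xb) (mkPt n s yb) := by
  have := dist_tail_le_dist (mkPt n t xb) (mkPt n s yb)
  rwa [tailPt_mkPt, tailPt_mkPt] at this

/-- Bi-Lipschitz bounds for the graph shift map. -/
lemma shift_bounds (hφ : LipschitzWith L φ) (x y : EuclideanSpace ℝ (Fin (n + 1))) :
    dist (shiftMap n φ x) (shiftMap n φ y) ≤ ((L : ℝ) + 2) * dist x y ∧
    dist x y ≤ ((L : ℝ) + 2) * dist (shiftMap n φ x) (shiftMap n φ y) := by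
  set tx := tailPt n x with htx
  set ty := tailPt n y with hty
  have hL0 : 0 ≤ (L : ℝ) := NNReal.coe_nonneg L
  have e1 : |φ tx - φ ty| ≤ (L : ℝ) * dist tx ty := by
    have h := hφ.dist_le_mul tx ty
    rwa [Real.dist_eq] at h
  have hshx : shiftMap n φ x = mkPt n (x 0 + φ tx) tx := rfl
  have hshy : shiftMap n φ y = mkPt n (y 0 + φ ty) ty := rfl
  rw [hshx, hshy]
  have hup := dist_mkPt_le (n := n) (x 0 + φ tx) (y 0 + φ ty) tx ty
  have hlo1 := abs_le_dist_mkPt (n := n) (x 0 + φ tx) (y 0 + φ ty) tx ty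
  have hlo2 := dist_le_dist_mkPt (n := n) (x 0 + φ tx) (y 0 + φ ty) tx ty
  have hdt : |x 0 - y 0| ≤ dist x y := abs_coord_le_dist x y
  have hΔ : dist tx ty ≤ dist x y := dist_tail_le_dist x y
  have hxy : dist x y ≤ |x 0 - y 0| + dist tx ty := dist_le_abs_add x y
  have habs1 : |x 0 + φ tx - (y 0 + φ ty)| ≤ |x 0 - y 0| + |φ tx - φ ty| := by
    calc |x 0 + φ tx - (y 0 + φ ty)| = |(x 0 - y 0) + (φ tx - φ ty)| := by ring_nf
    _ ≤ _ := abs_add_le _ _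
  have habs2 : |x 0 - y 0| ≤ |x 0 + φ tx - (y 0 + φ ty)| + |φ tx - φ ty| := by
    calc |x 0 - y 0| = |(x 0 + φ tx - (y 0 + φ ty)) - (φ tx - φ ty)| := by ring_nf
    _ ≤ _ := abs_sub _ _
  constructor
  · have hLd : (L : ℝ) * dist tx ty ≤ (L : ℝ) * dist x y := mul_le_mul_of_nonneg_left hΔ hL0
    linarith
  · have hLd : (L : ℝ) * dist tx ty ≤
        (L : ℝ) * dist (mkPt n (x 0 + φ tx) tx) (mkPt n (y 0 + φ ty) ty) :=
      mul_le_mul_of_nonneg_left hlo2 hL0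
    linarith

set_option maxHeartbeats 1000000 in
/-- Bi-Lipschitz bounds for collar vs shift (the interface case). -/
lemma mixed_bounds (hφ : LipschitzWith L φ) {δ : ℝ} (hδ : 0 < δ)
    {x y : EuclideanSpace ℝ (Fin (n + 1))}
    (hx1 : -δ < x 0) (hx2 : x 0 < 0) (hy : 0 < y 0) :
    dist (collarMap n φ (psiOff n φ δ) δ x) (shiftMap n φ y)
      ≤ ((L : ℝ) + 1 + sqc L) * dist x y ∧
    dist x y ≤ ((L : ℝ) + 2) * dist (collarMap n φ (psiOff n φ δ) δ x) (shiftMap n φ y) := by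
  set tx := tailPt n x with htx
  set ty := tailPt n y with hty
  have hL0 : 0 ≤ (L : ℝ) := NNReal.coe_nonneg L
  have hS1 : 1 ≤ sqc L := one_le_sqc L
  have hδ' : δ ≠ 0 := ne_of_gt hδ
  have e1 : |φ tx - φ ty| ≤ (L : ℝ) * dist tx ty := by
    have h := hφ.dist_le_mul tx ty
    rwa [Real.dist_eq] at h
  have hpx1 : psiOff n φ δ tx ≤ φ tx - δ := psi_le hφ hδ tx
  have hpx2 : φ tx - δ * sqc L ≤ psiOff n φ δ tx := psi_ge hφ hδ tx
  set Fx : ℝ := (1 + x 0 / δ) * φ tx - x 0 / δ * psiOff n φ δ tx with hFx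
  have hcx : collarMap n φ (psiOff n φ δ) δ x = mkPt n Fx tx := rfl
  have hshy : shiftMap n φ y = mkPt n (y 0 + φ ty) ty := rfl
  rw [hcx, hshy]
  have hup := dist_mkPt_le (n := n) Fx (y 0 + φ ty) tx ty
  have hlo1 := abs_le_dist_mkPt (n := n) Fx (y 0 + φ ty) tx ty
  have hlo2 := dist_le_dist_mkPt (n := n) Fx (y 0 + φ ty) tx ty
  have hdt : |x 0 - y 0| ≤ dist x y := abs_coord_le_dist x y
  have hΔ : dist tx ty ≤ dist x y := dist_tail_le_dist x y
  have hxy : dist x y ≤ |x 0 - y 0| + dist tx ty := dist_le_abs_add x y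
  -- the first coordinate difference
  have hdec : δ * (Fx - (y 0 + φ ty)) =
      δ * (φ tx - φ ty) + (x 0 * (φ tx - psiOff n φ δ tx) - δ * y 0) := by
    rw [hFx]
    field_simp
    ring
  -- bound on the "vertical" part B := x0*(φ-ψ)/δ - y0 : it has sign -, and |B| ∈ [|x0-y0|, S|x0-y0|]
  have hBneg : x 0 * (φ tx - psiOff n φ δ tx) - δ * y 0 ≤ 0 := by
    have h1 : 0 ≤ (- x 0) * (φ tx - psiOff n φ δ tx) :=
      mul_nonneg (by linarith) (by linarith)
    nlinarith [mul_pos hδ hy]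
  have habs0 : |x 0 - y 0| = y 0 - x 0 := by rw [abs_of_neg (by linarith)]; ring
  have hBub : |x 0 * (φ tx - psiOff n φ δ tx) - δ * y 0| ≤ δ * (sqc L * |x 0 - y 0|) := by
    rw [abs_of_nonpos hBneg, habs0]
    have hA := mul_le_mul_of_nonneg_left hpx2 (by linarith : (0:ℝ) ≤ - x 0)
    have hB : 0 ≤ (sqc L - 1) * δ * y 0 :=
      mul_nonneg (mul_nonneg (by linarith) hδ.le) hy.le
    nlinarith [hA, hB]
  have hBlb : δ * |x 0 - y 0| ≤ |x 0 * (φ tx - psiOff n φ δ tx) - δ * y 0| := by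
    rw [abs_of_nonpos hBneg, habs0]
    have hA := mul_le_mul_of_nonneg_left (by linarith : δ ≤ φ tx - psiOff n φ δ tx)
      (by linarith : (0:ℝ) ≤ - x 0)
    nlinarith [hA]
  have hAub : |Fx - (y 0 + φ ty)| ≤ (L : ℝ) * dist tx ty + sqc L * |x 0 - y 0| := by
    have h1 : |δ * (Fx - (y 0 + φ ty))| ≤
        δ * ((L : ℝ) * dist tx ty) + δ * (sqc L * |x 0 - y 0|) := by
      rw [hdec]
      calc |δ * (φ tx - φ ty) + (x 0 * (φ tx - psiOff n φ δ tx) - δ * y 0)|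
          ≤ |δ * (φ tx - φ ty)| + |x 0 * (φ tx - psiOff n φ δ tx) - δ * y 0| := abs_add_le _ _
      _ ≤ δ * ((L : ℝ) * dist tx ty) + δ * (sqc L * |x 0 - y 0|) := by
          rw [abs_mul, abs_of_pos hδ]
          exact add_le_add (mul_le_mul_of_nonneg_left e1 hδ.le) hBub
    rw [abs_mul, abs_of_pos hδ] at h1
    refine le_of_mul_le_mul_left ?_ hδ
    calc δ * |Fx - (y 0 + φ ty)| ≤ δ * ((L : ℝ) * dist tx ty) + δ * (sqc L * |x 0 - y 0|) := h1
    _ = δ * ((L : ℝ) * dist tx ty + sqc L * |x 0 - y 0|) := by ring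
  have hAlb : |x 0 - y 0| ≤ |Fx - (y 0 + φ ty)| + (L : ℝ) * dist tx ty := by
    have h1 : |x 0 * (φ tx - psiOff n φ δ tx) - δ * y 0| ≤
        |δ * (Fx - (y 0 + φ ty))| + |δ * (φ tx - φ ty)| := by
      calc |x 0 * (φ tx - psiOff n φ δ tx) - δ * y 0|
          = |δ * (Fx - (y 0 + φ ty)) - δ * (φ tx - φ ty)| := by rw [hdec]; ring_nf
      _ ≤ _ := abs_sub _ _
    rw [abs_mul, abs_mul, abs_of_pos hδ] at h1
    have h2 : δ * |φ tx - φ ty| ≤ δ * ((L : ℝ) * dist tx ty) :=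
      mul_le_mul_of_nonneg_left e1 hδ.le
    refine le_of_mul_le_mul_left ?_ hδ
    calc δ * |x 0 - y 0| ≤ δ * |Fx - (y 0 + φ ty)| + δ * |φ tx - φ ty| := by linarith [hBlb, h1]
    _ ≤ δ * (|Fx - (y 0 + φ ty)| + (L : ℝ) * dist tx ty) := by linarith [h2]
  constructor
  · have hLd : (L : ℝ) * dist tx ty ≤ (L : ℝ) * dist x y := mul_le_mul_of_nonneg_left hΔ hL0
    have hSd : sqc L * |x 0 - y 0| ≤ sqc L * dist x y :=
      mul_le_mul_of_nonneg_left hdt (by linarith)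
    linarith
  · have hLd : (L : ℝ) * dist tx ty ≤
        (L : ℝ) * dist (mkPt n Fx tx) (mkPt n (y 0 + φ ty) ty) :=
      mul_le_mul_of_nonneg_left hlo2 hL0
    linarith

/-- The upper bi-Lipschitz constant of the collar map. -/
def KC (L : NNReal) : ℝ := 2 * (L : ℝ) + CΨ L + 1 + sqc L

lemma one_le_KC (L : NNReal) : 1 ≤ KC L := by
  have := CΨ_nonneg L
  have := one_le_sqc L
  have := NNReal.coe_nonneg L
  unfold KC
  linarith

set_option maxHeartbeats 1000000 in
/-- Bi-Lipschitz bounds for the collar map on the stripe. -/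
lemma collar_bounds (hφ : LipschitzWith L φ) {δ : ℝ} (hδ : 0 < δ)
    {x y : EuclideanSpace ℝ (Fin (n + 1))}
    (hx1 : -δ < x 0) (hx2 : x 0 < 0) (hy1 : -δ < y 0) (hy2 : y 0 < 0) :
    dist (collarMap n φ (psiOff n φ δ) δ x) (collarMap n φ (psiOff n φ δ) δ y)
      ≤ KC L * dist x y ∧
    dist x y ≤ KC L * dist (collarMap n φ (psiOff n φ δ) δ x)
      (collarMap n φ (psiOff n φ δ) δ y) := by
  set tx := tailPt n x with htx
  set ty := tailPt n y with hty
  have hL0 : 0 ≤ (L : ℝ) := NNReal.coe_nonneg L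
  have hS1 : 1 ≤ sqc L := one_le_sqc L
  have hC0 : 0 ≤ CΨ L := CΨ_nonneg L
  have hδ' : δ ≠ 0 := ne_of_gt hδ
  have e1 : |φ tx - φ ty| ≤ (L : ℝ) * dist tx ty := by
    have h := hφ.dist_le_mul tx ty
    rwa [Real.dist_eq] at h
  have e2 : |psiOff n φ δ tx - psiOff n φ δ ty| ≤ CΨ L * dist tx ty := psi_dist_le hφ hδ tx ty
  have hpx1 : psiOff n φ δ tx ≤ φ tx - δ := psi_le hφ hδ tx
  have hpx2 : φ tx - δ * sqc L ≤ psiOff n φ δ tx := psi_ge hφ hδ tx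
  set Fx : ℝ := (1 + x 0 / δ) * φ tx - x 0 / δ * psiOff n φ δ tx with hFx
  set Fy : ℝ := (1 + y 0 / δ) * φ ty - y 0 / δ * psiOff n φ δ ty with hFy
  have hcx : collarMap n φ (psiOff n φ δ) δ x = mkPt n Fx tx := rfl
  have hcy : collarMap n φ (psiOff n φ δ) δ y = mkPt n Fy ty := rfl
  rw [hcx, hcy]
  have hup := dist_mkPt_le (n := n) Fx Fy tx ty
  have hlo1 := abs_le_dist_mkPt (n := n) Fx Fy tx ty
  have hlo2 := dist_le_dist_mkPt (n := n) Fx Fy tx ty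
  have hdt : |x 0 - y 0| ≤ dist x y := abs_coord_le_dist x y
  have hΔ : dist tx ty ≤ dist x y := dist_tail_le_dist x y
  have hxy : dist x y ≤ |x 0 - y 0| + dist tx ty := dist_le_abs_add x y
  have hdec : δ * (Fx - Fy) =
      δ * (φ tx - φ ty) + (x 0 - y 0) * (φ tx - psiOff n φ δ tx)
        + y 0 * ((φ tx - psiOff n φ δ tx) - (φ ty - psiOff n φ δ ty)) := by
    rw [hFx, hFy]
    field_simp
    ring
  have hX : |(φ tx - psiOff n φ δ tx) - (φ ty - psiOff n φ δ ty)| ≤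
      ((L : ℝ) + CΨ L) * dist tx ty := by
    calc |(φ tx - psiOff n φ δ tx) - (φ ty - psiOff n φ δ ty)|
        = |(φ tx - φ ty) - (psiOff n φ δ tx - psiOff n φ δ ty)| := by ring_nf
    _ ≤ |φ tx - φ ty| + |psiOff n φ δ tx - psiOff n φ δ ty| := abs_sub _ _
    _ ≤ _ := by linarith [e1, e2]
  have ht2 : |(x 0 - y 0) * (φ tx - psiOff n φ δ tx)| ≤ |x 0 - y 0| * (δ * sqc L) := by
    rw [abs_mul, abs_of_pos (by linarith : 0 < φ tx - psiOff n φ δ tx)]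
    exact mul_le_mul_of_nonneg_left (by linarith) (abs_nonneg _)
  have ht3 : |y 0 * ((φ tx - psiOff n φ δ tx) - (φ ty - psiOff n φ δ ty))| ≤
      δ * (((L : ℝ) + CΨ L) * dist tx ty) := by
    rw [abs_mul]
    have hy0 : |y 0| ≤ δ := by rw [abs_of_neg hy2]; linarith
    exact mul_le_mul hy0 hX (abs_nonneg _) hδ.le
  have t1 : |δ * (φ tx - φ ty)| ≤ δ * ((L : ℝ) * dist tx ty) := by
    rw [abs_mul, abs_of_pos hδ]
    exact mul_le_mul_of_nonneg_left e1 hδ.le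
  have hAub : |Fx - Fy| ≤ (2 * (L : ℝ) + CΨ L) * dist tx ty + sqc L * |x 0 - y 0| := by
    have h1 : |δ * (Fx - Fy)| ≤ δ * ((L : ℝ) * dist tx ty) + |x 0 - y 0| * (δ * sqc L)
        + δ * (((L : ℝ) + CΨ L) * dist tx ty) := by
      rw [hdec]
      calc |δ * (φ tx - φ ty) + (x 0 - y 0) * (φ tx - psiOff n φ δ tx)
            + y 0 * ((φ tx - psiOff n φ δ tx) - (φ ty - psiOff n φ δ ty))|
          ≤ |δ * (φ tx - φ ty) + (x 0 - y 0) * (φ tx - psiOff n φ δ tx)|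
            + |y 0 * ((φ tx - psiOff n φ δ tx) - (φ ty - psiOff n φ δ ty))| := abs_add_le _ _
      _ ≤ _ := by
          have := abs_add_le (δ * (φ tx - φ ty)) ((x 0 - y 0) * (φ tx - psiOff n φ δ tx))
          linarith [t1, ht2, ht3]
    rw [abs_mul, abs_of_pos hδ] at h1
    refine le_of_mul_le_mul_left ?_ hδ
    calc δ * |Fx - Fy| ≤ δ * ((L : ℝ) * dist tx ty) + |x 0 - y 0| * (δ * sqc L)
        + δ * (((L : ℝ) + CΨ L) * dist tx ty) := h1
    _ = δ * ((2 * (L : ℝ) + CΨ L) * dist tx ty + sqc L * |x 0 - y 0|) := by ring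
  have hAlb : |x 0 - y 0| ≤ |Fx - Fy| + (2 * (L : ℝ) + CΨ L) * dist tx ty := by
    have h1 : |(x 0 - y 0) * (φ tx - psiOff n φ δ tx)| ≤
        |δ * (Fx - Fy)| + |δ * (φ tx - φ ty)|
          + |y 0 * ((φ tx - psiOff n φ δ tx) - (φ ty - psiOff n φ δ ty))| := by
      calc |(x 0 - y 0) * (φ tx - psiOff n φ δ tx)|
          = |δ * (Fx - Fy) - δ * (φ tx - φ ty)
              - y 0 * ((φ tx - psiOff n φ δ tx) - (φ ty - psiOff n φ δ ty))| := by
            rw [hdec]; ring_nf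
      _ ≤ |δ * (Fx - Fy) - δ * (φ tx - φ ty)|
            + |y 0 * ((φ tx - psiOff n φ δ tx) - (φ ty - psiOff n φ δ ty))| := abs_sub _ _
      _ ≤ _ := by
          have := abs_sub (δ * (Fx - Fy)) (δ * (φ tx - φ ty))
          linarith
    have h2 : |x 0 - y 0| * δ ≤ |(x 0 - y 0) * (φ tx - psiOff n φ δ tx)| := by
      rw [abs_mul, abs_of_pos (by linarith : 0 < φ tx - psiOff n φ δ tx)]
      exact mul_le_mul_of_nonneg_left (by linarith) (abs_nonneg _)
    rw [abs_mul (a := δ), abs_of_pos hδ] at h1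
    refine le_of_mul_le_mul_left ?_ hδ
    calc δ * |x 0 - y 0| = |x 0 - y 0| * δ := by ring
    _ ≤ δ * |Fx - Fy| + |δ * (φ tx - φ ty)|
          + |y 0 * ((φ tx - psiOff n φ δ tx) - (φ ty - psiOff n φ δ ty))| := by linarith
    _ ≤ δ * (|Fx - Fy| + (2 * (L : ℝ) + CΨ L) * dist tx ty) := by
        have hd1 : 0 ≤ dist tx ty := dist_nonneg
        have := mul_nonneg hL0 hd1
        nlinarith [t1, ht3]
  constructor
  · have hc1 : (2 * (L : ℝ) + CΨ L + 1) * dist tx ty ≤ (2 * (L : ℝ) + CΨ L + 1) * dist x y :=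
      mul_le_mul_of_nonneg_left hΔ (by linarith)
    have hc2 : sqc L * |x 0 - y 0| ≤ sqc L * dist x y :=
      mul_le_mul_of_nonneg_left hdt (by linarith)
    unfold KC
    linarith
  · have hc1 : (2 * (L : ℝ) + CΨ L) * dist tx ty ≤
        (2 * (L : ℝ) + CΨ L) * dist (mkPt n Fx tx) (mkPt n Fy ty) :=
      mul_le_mul_of_nonneg_left hlo2 (by linarith)
    have hc2 : 0 ≤ (sqc L - 1) * dist (mkPt n Fx tx) (mkPt n Fy ty) :=
      mul_nonneg (by linarith) dist_nonneg
    unfold KC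
    linarith [hlo1, hlo2, hxy, hAlb, hc1, hc2]

end Maps
section Kernel

lemma sphereArea_nonneg (d : ℕ) : 0 ≤ sphereArea d :=
  mul_nonneg (Nat.cast_nonneg d) ENNReal.toReal_nonneg

lemma sphereArea_pos {d : ℕ} (hd : 0 < d) : 0 < sphereArea d :=
  mul_pos (by exact_mod_cast hd)
    (ENNReal.toReal_pos (ne_of_gt (Metric.measure_ball_pos _ _ one_pos)) measure_ball_lt_top.ne)

lemma nlKernel_nonneg (d : ℕ) {p β η r : ℝ} (he : 0 ≤ (d : ℝ) + p - β) (hη : 0 ≤ η)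
    (hr : 0 ≤ r) : 0 ≤ nlKernel d p β η r := by
  unfold nlKernel
  split
  · exact mul_nonneg
      (div_nonneg he (mul_nonneg (sphereArea_nonneg d) (Real.rpow_nonneg hη _)))
      (Real.rpow_nonneg hr _)
  · exact le_refl 0

lemma kernel_dom (d : ℕ) (hd : 0 < d) {p β M δ r R : ℝ} (hβ0 : 0 ≤ β) (hβ : β < (d : ℝ) + p)
    (hM : 1 ≤ M) (hδ : 0 < δ) (hr : 0 ≤ r) (hR : 0 ≤ R)
    (hRr : R ≤ M * r) (hrR : r ≤ M * R) :
    nlKernel d p β (δ / M) r ≤ M ^ ((d : ℝ) + p) * nlKernel d p β δ R := by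
  have hM0 : 0 < M := lt_of_lt_of_le one_pos hM
  have he : 0 < (d : ℝ) + p - β := by linarith
  by_cases hcut : r < δ / M
  · have hMr : r * M < δ := (lt_div_iff₀ hM0).mp hcut
    have hRδ : R < δ := lt_of_le_of_lt hRr (by linarith [hMr])
    unfold nlKernel
    rw [if_pos hcut, if_pos hRδ]
    have hS := sphereArea_pos hd
    have hδe : (0:ℝ) < δ ^ ((d : ℝ) + p - β) := Real.rpow_pos_of_pos hδ _
    have hMe : (0:ℝ) < M ^ ((d : ℝ) + p - β) := Real.rpow_pos_of_pos hM0 _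
    have hdiv : (δ / M) ^ ((d : ℝ) + p - β) = δ ^ ((d : ℝ) + p - β) / M ^ ((d : ℝ) + p - β) :=
      Real.div_rpow hδ.le hM0.le _
    have key : r ^ (-β) ≤ M ^ β * R ^ (-β) := by
      rcases eq_or_lt_of_le hβ0 with hβz | hβp
      · rw [← hβz]
        simp
      · rcases eq_or_lt_of_le hr with hr0 | hr0
        · have hR0 : R = 0 := le_antisymm (by rw [← hr0] at hRr; linarith [hRr]) hR
          rw [← hr0, hR0, Real.zero_rpow (by linarith : -β ≠ 0)]
          simp
        · have hR0 : 0 < R := by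
            by_contra h
            push_neg at h
            nlinarith [hrR, mul_nonneg hM0.le (neg_nonneg.2 h)]
          have hRM : R / M ≤ r := (div_le_iff₀ hM0).mpr (by linarith [hRr])
          have hRM0 : 0 < R / M := div_pos hR0 hM0
          have h1 : r ^ (-β) ≤ (R / M) ^ (-β) :=
            Real.rpow_le_rpow_of_nonpos hRM0 hRM (neg_nonpos.2 hβ0)
          rw [Real.div_rpow hR hM0.le, Real.rpow_neg hM0.le, div_eq_mul_inv, inv_inv] at h1
          calc r ^ (-β) ≤ R ^ (-β) * M ^ β := h1
          _ = M ^ β * R ^ (-β) := mul_comm _ _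
    have hrew : ((d : ℝ) + p - β) / (sphereArea d * (δ ^ ((d : ℝ) + p - β) / M ^ ((d : ℝ) + p - β)))
        = ((d : ℝ) + p - β) / (sphereArea d * δ ^ ((d : ℝ) + p - β)) * M ^ ((d : ℝ) + p - β) := by
      field_simp
    have hMdp : M ^ ((d : ℝ) + p) = M ^ ((d : ℝ) + p - β) * M ^ β := by
      rw [← Real.rpow_add hM0]
      ring_nf
    rw [hdiv, hrew, hMdp]
    have hC : 0 < ((d : ℝ) + p - β) / (sphereArea d * δ ^ ((d : ℝ) + p - β)) :=
      div_pos he (mul_pos hS hδe)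
    calc ((d : ℝ) + p - β) / (sphereArea d * δ ^ ((d : ℝ) + p - β)) * M ^ ((d : ℝ) + p - β)
          * r ^ (-β)
        ≤ ((d : ℝ) + p - β) / (sphereArea d * δ ^ ((d : ℝ) + p - β)) * M ^ ((d : ℝ) + p - β)
          * (M ^ β * R ^ (-β)) :=
          mul_le_mul_of_nonneg_left key (le_of_lt (mul_pos hC hMe))
    _ = M ^ ((d : ℝ) + p - β) * M ^ β
          * (((d : ℝ) + p - β) / (sphereArea d * δ ^ ((d : ℝ) + p - β)) * R ^ (-β)) := by ring
  · unfold nlKernel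
    rw [if_neg hcut]
    have h2 : (0:ℝ) ≤ nlKernel d p β δ R := nlKernel_nonneg d (by linarith) hδ.le hR
    unfold nlKernel at h2
    exact mul_nonneg (Real.rpow_nonneg (by linarith) _) h2

end Kernel
/-- kernel domination under graph straightening, with
`M = max(L + 1 + √(L²+1), K_L)` and `K_L` the upper bi-Lipschitz constant of the
collar map. -/
theorem kernel_domination_straightening (n : ℕ) (hn : 1 ≤ n) (p β : ℝ)
    (hp : 1 < p) (hβ0 : 0 ≤ β) (hβ : β < ((n : ℝ) + 1) + p)
    (L : NNReal) (φ : EuclideanSpace ℝ (Fin n) → ℝ)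
    (hφ0 : ∀ xb, 0 ≤ φ xb) (hφ : LipschitzWith L φ) :
    ∃ K : ℝ, 1 ≤ K
      ∧ (∀ (δ : ℝ), 0 < δ →
          ∀ x y : EuclideanSpace ℝ (Fin (n + 1)),
            x ∈ stripe (n + 1) (Nat.succ_pos n) (-δ) 0 →
            y ∈ stripe (n + 1) (Nat.succ_pos n) (-δ) 0 →
            dist (collarMap n φ (psiOff n φ δ) δ x) (collarMap n φ (psiOff n φ δ) δ y)
              ≤ K * dist x y)
      ∧ ∀ (δ : ℝ), 0 < δ → ∀ M : ℝ,
          M = max ((L : ℝ) + 1 + Real.sqrt ((L : ℝ) ^ 2 + 1)) K →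
          (∀ x y : EuclideanSpace ℝ (Fin (n + 1)), 0 < x 0 → 0 < y 0 →
              nlKernel (n + 1) p β (δ / M) (dist x y)
                ≤ M ^ ((n : ℝ) + 1 + p)
                    * nlKernel (n + 1) p β δ (dist (shiftMap n φ x) (shiftMap n φ y)))
          ∧ (∀ x y : EuclideanSpace ℝ (Fin (n + 1)),
              x ∈ stripe (n + 1) (Nat.succ_pos n) (-δ) 0 → 0 < y 0 →
              nlKernel (n + 1) p β (δ / M) (dist x y)
                ≤ M ^ ((n : ℝ) + 1 + p)
                    * nlKernel (n + 1) p β δ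
                        (dist (collarMap n φ (psiOff n φ δ) δ x) (shiftMap n φ y)))
          ∧ (∀ x y : EuclideanSpace ℝ (Fin (n + 1)),
              x ∈ stripe (n + 1) (Nat.succ_pos n) (-δ) 0 →
              y ∈ stripe (n + 1) (Nat.succ_pos n) (-δ) 0 →
              nlKernel (n + 1) p β (δ / M) (dist x y)
                ≤ M ^ ((n : ℝ) + 1 + p)
                    * nlKernel (n + 1) p β δ
                        (dist (collarMap n φ (psiOff n φ δ) δ x)
                              (collarMap n φ (psiOff n φ δ) δ y))) := by
  refine ⟨KC L, one_le_KC L, ?_, ?_⟩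
  · intro δ hδ x y hx hy
    have hx1 : -δ < x 0 := hx.1
    have hx2 : x 0 < 0 := hx.2
    have hy1 : -δ < y 0 := hy.1
    have hy2 : y 0 < 0 := hy.2
    exact (collar_bounds hφ hδ hx1 hx2 hy1 hy2).1
  · intro δ hδ M hM
    have hsq : Real.sqrt ((L : ℝ) ^ 2 + 1) = sqc L := rfl
    rw [hsq] at hM
    have hMK : KC L ≤ M := by rw [hM]; exact le_max_right _ _
    have hML : (L : ℝ) + 1 + sqc L ≤ M := by rw [hM]; exact le_max_left _ _
    have hM1 : 1 ≤ M := le_trans (one_le_KC L) hMK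
    have hL2M : (L : ℝ) + 2 ≤ M := by have := one_le_sqc L; linarith
    have hβ' : β < ((n + 1 : ℕ) : ℝ) + p := by push_cast; linarith
    have hcast : ((n + 1 : ℕ) : ℝ) + p = (n : ℝ) + 1 + p := by push_cast; ring
    refine ⟨?_, ?_, ?_⟩
    · intro x y hx hy
      obtain ⟨h1, h2⟩ := shift_bounds hφ x y
      have hRr : dist (shiftMap n φ x) (shiftMap n φ y) ≤ M * dist x y :=
        le_trans h1 (mul_le_mul_of_nonneg_right hL2M dist_nonneg)
      have hrR : dist x y ≤ M * dist (shiftMap n φ x) (shiftMap n φ y) :=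
        le_trans h2 (mul_le_mul_of_nonneg_right hL2M dist_nonneg)
      have := kernel_dom (n + 1) (Nat.succ_pos n) hβ0 hβ' hM1 hδ dist_nonneg dist_nonneg
        hRr hrR
      rwa [hcast] at this
    · intro x y hx hy
      have hx1 : -δ < x 0 := hx.1
      have hx2 : x 0 < 0 := hx.2
      obtain ⟨h1, h2⟩ := mixed_bounds hφ hδ hx1 hx2 hy
      have hRr : dist (collarMap n φ (psiOff n φ δ) δ x) (shiftMap n φ y) ≤ M * dist x y :=
        le_trans h1 (mul_le_mul_of_nonneg_right hML dist_nonneg)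
      have hrR : dist x y ≤ M * dist (collarMap n φ (psiOff n φ δ) δ x) (shiftMap n φ y) :=
        le_trans h2 (mul_le_mul_of_nonneg_right hL2M dist_nonneg)
      have := kernel_dom (n + 1) (Nat.succ_pos n) hβ0 hβ' hM1 hδ dist_nonneg dist_nonneg
        hRr hrR
      rwa [hcast] at this
    · intro x y hx hy
      have hx1 : -δ < x 0 := hx.1
      have hx2 : x 0 < 0 := hx.2
      have hy1 : -δ < y 0 := hy.1
      have hy2 : y 0 < 0 := hy.2
      obtain ⟨h1, h2⟩ := collar_bounds hφ hδ hx1 hx2 hy1 hy2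
      have hRr : dist (collarMap n φ (psiOff n φ δ) δ x) (collarMap n φ (psiOff n φ δ) δ y)
          ≤ M * dist x y :=
        le_trans h1 (mul_le_mul_of_nonneg_right hMK dist_nonneg)
      have hrR : dist x y ≤
          M * dist (collarMap n φ (psiOff n φ δ) δ x) (collarMap n φ (psiOff n φ δ) δ y) :=
        le_trans h2 (mul_le_mul_of_nonneg_right hMK dist_nonneg)
      have := kernel_dom (n + 1) (Nat.succ_pos n) hβ0 hβ' hM1 hδ dist_nonneg dist_nonneg
        hRr hrR
      rwa [hcast] at this
end
end
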